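/- arXiv:2504.12519 — 5 statements merged into one kernel-verified Lean document; each statement's English description precedes it below -/
import Mathlib

section
/- Assume U_Σ < 1. If the sequence (V_t) is bounded, then the sequence (L_t) is bounded; moreover, if V_t → 0 as t → ∞, then L_t → 0 as t → ∞. -/
open Filter Topology
open scoped Classical

/-- The propagator expansion of the loss:
`L_t = (1/2)·(V_{t+1} + Σ_{m=1}^{t} Σ_{0<t_1<⋯<t_m<t+1}
  U_{t+1−t_m}·U_{t_m−t_{m−1}}⋯U_{t_2−t_1}·V_{t_1})`.
Strictly increasing tuples `(t_1,…,t_m)` of length `m+1` (here the length parameter `m`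
runs over `Finset.range t`, representing tuple length `m+1 ∈ {1,…,t}`) are encoded as
strictly monotone maps `τ : Fin (m+1) → Fin (t+1)` with `0 < τ 0`. -/
noncomputable def lossSeq (U V : ℕ → ℝ) (t : ℕ) : ℝ :=
  (1 / 2) * (V (t + 1) +
    ∑ m ∈ Finset.range t,
      ∑ τ ∈ Finset.univ.filter
          (fun τ : Fin (m + 1) → Fin (t + 1) => StrictMono τ ∧ 0 < (τ 0 : ℕ)),
        U ((t + 1) - (τ (Fin.last m) : ℕ)) *
          (∏ j : Fin m, U ((τ j.succ : ℕ) - (τ j.castSucc : ℕ))) * V (τ 0))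

namespace LossAux

noncomputable def chainSum (U V : ℕ → ℝ) (t m : ℕ) : ℝ :=
  ∑ τ ∈ Finset.univ.filter
      (fun τ : Fin (m + 1) → Fin (t + 1) => StrictMono τ ∧ 0 < (τ 0 : ℕ)),
    U ((t + 1) - (τ (Fin.last m) : ℕ)) *
      (∏ j : Fin m, U ((τ j.succ : ℕ) - (τ j.castSucc : ℕ))) * V (τ 0)

noncomputable def chainSumN (U V : ℕ → ℝ) (t m : ℕ) : ℝ :=
  ∑ f ∈ (Fintype.piFinset fun _ : Fin (m + 1) => Finset.range (t + 1)).filter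
      (fun f => StrictMono f ∧ 0 < f 0),
    U ((t + 1) - f (Fin.last m)) * (∏ j : Fin m, U (f j.succ - f j.castSucc)) * V (f 0)

lemma lossSeq_eq_chainSum (U V : ℕ → ℝ) (t : ℕ) :
    lossSeq U V t = (1 / 2) * (V (t + 1) + ∑ m ∈ Finset.range t, chainSum U V t m) := rfl

lemma chainSum_eq_chainSumN (U V : ℕ → ℝ) (t m : ℕ) :
    chainSum U V t m = chainSumN U V t m := by
  rw [chainSum, chainSumN]
  refine Finset.sum_bij' (fun τ _ => fun k => (τ k : ℕ))
    (fun f hf => fun k => (⟨f k, by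
      have := (Finset.mem_filter.mp hf).1
      exact Finset.mem_range.mp ((Fintype.mem_piFinset.mp this) k)⟩ : Fin (t + 1)))
    ?_ ?_ ?_ ?_ ?_
  · intro τ hτ
    obtain ⟨-, h1, h2⟩ := Finset.mem_filter.mp hτ
    refine Finset.mem_filter.mpr ⟨Fintype.mem_piFinset.mpr fun k => Finset.mem_range.mpr (τ k).isLt, ?_, h2⟩
    intro a b hab
    exact h1 hab
  · intro f hf
    obtain ⟨-, h1, h2⟩ := Finset.mem_filter.mp hf
    refine Finset.mem_filter.mpr ⟨Finset.mem_univ _, ?_, h2⟩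
    intro a b hab
    exact h1 hab
  · intro τ hτ; funext k; rfl
  · intro f hf; funext k; rfl
  · intro τ hτ; rfl

end LossAux

namespace LossAux

lemma chainSumN_eq_zero (U V : ℕ → ℝ) {t m : ℕ} (h : t ≤ m) : chainSumN U V t m = 0 := by
  rw [chainSumN, Finset.filter_eq_empty_iff.mpr, Finset.sum_empty]
  rintro f hf ⟨h1, h2⟩
  have hmem := Fintype.mem_piFinset.mp hf
  have key : ∀ j : Fin (m + 1), (j : ℕ) < f j := by
    intro j
    induction j using Fin.induction with
    | zero => exact h2
    | succ i ih =>
      have hlt : f i.castSucc < f i.succ := h1 Fin.castSucc_lt_succ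
      simp only [Fin.coe_castSucc] at ih
      simp only [Fin.val_succ]
      omega
  have h3 := key (Fin.last m)
  have h4 := Finset.mem_range.mp (hmem (Fin.last m))
  simp only [Fin.val_last] at h3
  omega

lemma chainSumN_zero (U V : ℕ → ℝ) (t : ℕ) :
    chainSumN U V t 0 = ∑ s ∈ Finset.range t, U (t - s) * V (s + 1) := by
  rw [chainSumN]
  refine Finset.sum_bij' (fun f _ => f 0 - 1) (fun s _ => fun _ => s + 1) ?_ ?_ ?_ ?_ ?_
  · intro f hf
    obtain ⟨hp, -, h2⟩ := Finset.mem_filter.mp hf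
    have := Finset.mem_range.mp (Fintype.mem_piFinset.mp hp 0)
    exact Finset.mem_range.mpr (show f 0 - 1 < t by omega)
  · intro s hs
    have hs' := Finset.mem_range.mp hs
    refine Finset.mem_filter.mpr ⟨Fintype.mem_piFinset.mpr fun k =>
      Finset.mem_range.mpr (show s + 1 < t + 1 by omega), ?_, Nat.succ_pos s⟩
    have hlt : ∀ a b : Fin 1, ¬ a < b := by decide
    exact fun a b hab => absurd hab (hlt a b)
  · intro f hf
    obtain ⟨-, -, h2⟩ := Finset.mem_filter.mp hf
    funext k
    have hk : k = 0 := Fin.fin_one_eq_zero k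
    rw [hk]
    omega
  · intro s hs; dsimp only; omega
  · intro f hf
    obtain ⟨-, -, h2⟩ := Finset.mem_filter.mp hf
    have h0 : f (Fin.last 0) = f 0 := congrArg f (Fin.fin_one_eq_zero _)
    have e1 : t + 1 - f 0 = t - (f 0 - 1) := by omega
    have e2 : f 0 - 1 + 1 = f 0 := by omega
    rw [h0, e1, e2]
    simp only [Finset.univ_eq_empty, Finset.prod_empty, mul_one]

end LossAux

namespace LossAux

lemma chainSumN_succ (U V : ℕ → ℝ) (t m : ℕ) :
    chainSumN U V t (m + 1) = ∑ s ∈ Finset.range t, U (t - s) * chainSumN U V s m := by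
  have hins : ∀ s, U (t - s) * chainSumN U V s m
      = ∑ g ∈ (Fintype.piFinset fun _ : Fin (m + 1) => Finset.range (s + 1)).filter
          (fun g => StrictMono g ∧ 0 < g 0),
        U (t - s) * (U ((s + 1) - g (Fin.last m)) *
          (∏ j : Fin m, U (g j.succ - g j.castSucc)) * V (g 0)) := by
    intro s; rw [chainSumN, Finset.mul_sum]
  rw [Finset.sum_congr rfl fun s _ => hins s, Finset.sum_sigma']
  rw [chainSumN]
  refine Finset.sum_bij'
    (fun f _ => (⟨f (Fin.last (m + 1)) - 1, fun k => f k.castSucc⟩ :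
      (s : ℕ) × (Fin (m + 1) → ℕ)))
    (fun x _ => Fin.snoc x.2 (x.1 + 1)) ?_ ?_ ?_ ?_ ?_
  · -- hi
    intro f hf
    obtain ⟨hp, h1, h2⟩ := Finset.mem_filter.mp hf
    have hmem : ∀ k, f k < t + 1 := fun k => Finset.mem_range.mp (Fintype.mem_piFinset.mp hp k)
    have hlast1 : 1 ≤ f (Fin.last (m + 1)) := by
      have := h1.monotone (Fin.zero_le (Fin.last (m + 1)))
      omega
    refine Finset.mem_sigma.mpr ⟨Finset.mem_range.mpr ?_, Finset.mem_filter.mpr ⟨?_, ?_, ?_⟩⟩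
    · show f (Fin.last (m + 1)) - 1 < t
      have := hmem (Fin.last (m + 1)); omega
    · refine Fintype.mem_piFinset.mpr fun k => Finset.mem_range.mpr ?_
      show f k.castSucc < f (Fin.last (m + 1)) - 1 + 1
      have := h1 (Fin.castSucc_lt_last k)
      omega
    · exact fun a b hab => h1 (by exact Fin.castSucc_lt_castSucc_iff.mpr hab)
    · show 0 < f (Fin.castSucc 0)
      rw [Fin.castSucc_zero]
      exact h2
  · -- hj
    rintro ⟨s, g⟩ hx
    obtain ⟨hs, hg⟩ := Finset.mem_sigma.mp hx
    have hst := Finset.mem_range.mp hs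
    obtain ⟨hp, h1, h2⟩ := Finset.mem_filter.mp hg
    have hmem : ∀ k, g k < s + 1 := fun k => Finset.mem_range.mp (Fintype.mem_piFinset.mp hp k)
    dsimp only at *
    refine Finset.mem_filter.mpr ⟨Fintype.mem_piFinset.mpr fun k => Finset.mem_range.mpr ?_, ?_, ?_⟩
    · induction k using Fin.lastCases with
      | last => rw [Fin.snoc_last]; omega
      | cast i => rw [Fin.snoc_castSucc]; have := hmem i; omega
    · rw [Fin.strictMono_iff_lt_succ]
      intro i
      induction i using Fin.lastCases with
      | last =>
        rw [Fin.succ_last, Fin.snoc_last, Fin.snoc_castSucc]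
        exact hmem (Fin.last m)
      | cast i =>
        rw [Fin.succ_castSucc, Fin.snoc_castSucc, Fin.snoc_castSucc]
        exact h1 Fin.castSucc_lt_succ
    · show 0 < (Fin.snoc g (s + 1) : Fin (m + 2) → ℕ) 0
      simp only [← Fin.castSucc_zero, Fin.snoc_castSucc]
      exact h2
  · -- left inverse
    intro f hf
    obtain ⟨hp, h1, h2⟩ := Finset.mem_filter.mp hf
    have hlast1 : 1 ≤ f (Fin.last (m + 1)) := by
      have := h1.monotone (Fin.zero_le (Fin.last (m + 1)))
      omega
    funext i
    dsimp only
    induction i using Fin.lastCases with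
    | last => rw [Fin.snoc_last]; omega
    | cast i => rw [Fin.snoc_castSucc]
  · -- right inverse
    rintro ⟨s, g⟩ hx
    dsimp only
    congr 1
    · rw [Fin.snoc_last]; omega
    · funext k
      rw [Fin.snoc_castSucc]
  · -- values
    intro f hf
    obtain ⟨hp, h1, h2⟩ := Finset.mem_filter.mp hf
    have hlast1 : 1 ≤ f (Fin.last (m + 1)) := by
      have := h1.monotone (Fin.zero_le (Fin.last (m + 1)))
      omega
    dsimp only
    have e1 : t - (f (Fin.last (m + 1)) - 1) = t + 1 - f (Fin.last (m + 1)) := by omega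
    have e2 : f (Fin.last (m + 1)) - 1 + 1 = f (Fin.last (m + 1)) := by omega
    rw [e1, e2]
    have e3 : f (Fin.castSucc 0) = f 0 := by rw [Fin.castSucc_zero]
    rw [e3]
    rw [Fin.prod_univ_castSucc (fun j : Fin (m + 1) => U (f j.succ - f j.castSucc))]
    have e4 : ∀ j : Fin m, U (f (j.castSucc).succ - f (j.castSucc).castSucc)
        = U (f (j.succ).castSucc - f (j.castSucc).castSucc) := by
      intro j; rw [Fin.succ_castSucc]
    rw [Finset.prod_congr rfl fun j _ => e4 j]
    rw [show (Fin.last m).succ = Fin.last (m + 1) from Fin.succ_last m]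
    ring

end LossAux

namespace LossAux

lemma chainSum_zero' (U V : ℕ → ℝ) (t : ℕ) :
    chainSum U V t 0 = ∑ s ∈ Finset.range t, U (t - s) * V (s + 1) := by
  rw [chainSum_eq_chainSumN, chainSumN_zero]

lemma chainSum_succ (U V : ℕ → ℝ) (t m : ℕ) :
    chainSum U V t (m + 1) = ∑ s ∈ Finset.range t, U (t - s) * chainSum U V s m := by
  rw [chainSum_eq_chainSumN, chainSumN_succ]
  exact Finset.sum_congr rfl fun s _ => by rw [chainSum_eq_chainSumN]

lemma chainSum_eq_zero' (U V : ℕ → ℝ) {t m : ℕ} (h : t ≤ m) : chainSum U V t m = 0 := by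
  rw [chainSum_eq_chainSumN, chainSumN_eq_zero U V h]

lemma main_identity (U V : ℕ → ℝ) (t : ℕ) :
    ∑ m ∈ Finset.range t, chainSum U V t m
      = ∑ s ∈ Finset.range t, U (t - s) * (V (s + 1) + ∑ m ∈ Finset.range s, chainSum U V s m) := by
  cases t with
  | zero => simp
  | succ n =>
    rw [Finset.sum_range_succ']
    have h1 : ∀ m ∈ Finset.range n, chainSum U V (n + 1) (m + 1)
        = ∑ s ∈ Finset.range (n + 1), U (n + 1 - s) * chainSum U V s m :=
      fun m _ => chainSum_succ U V (n + 1) m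
    rw [Finset.sum_congr rfl h1, chainSum_zero', Finset.sum_comm]
    have h2 : ∀ s ∈ Finset.range (n + 1),
        ∑ m ∈ Finset.range n, U (n + 1 - s) * chainSum U V s m
          = U (n + 1 - s) * ∑ m ∈ Finset.range s, chainSum U V s m := by
      intro s hs
      have hs' := Finset.mem_range.mp hs
      rw [← Finset.mul_sum]
      congr 1
      refine (Finset.sum_subset (Finset.range_subset_range.mpr (by omega)) ?_).symm
      intro m _ hm
      exact chainSum_eq_zero' U V (by simp at hm ⊢; omega)
    rw [Finset.sum_congr rfl h2, ← Finset.sum_add_distrib]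
    exact Finset.sum_congr rfl fun s _ => by ring

lemma two_lossSeq (U V : ℕ → ℝ) (t : ℕ) :
    2 * lossSeq U V t = V (t + 1) + ∑ s ∈ Finset.range t, U (t - s) * (2 * lossSeq U V s) := by
  calc 2 * lossSeq U V t = V (t + 1) + ∑ m ∈ Finset.range t, chainSum U V t m := by
        rw [lossSeq_eq_chainSum]; ring
    _ = V (t + 1) + ∑ s ∈ Finset.range t, U (t - s)
          * (V (s + 1) + ∑ m ∈ Finset.range s, chainSum U V s m) := by rw [main_identity]
    _ = V (t + 1) + ∑ s ∈ Finset.range t, U (t - s) * (2 * lossSeq U V s) := by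
        refine congrArg _ (Finset.sum_congr rfl fun s _ => ?_)
        rw [lossSeq_eq_chainSum]; ring

end LossAux

/-- Assume `U_Σ < 1`. If `(V_t)` is bounded then `(L_t)` is bounded; moreover if
`V_t → 0` then `L_t → 0`. -/
theorem stmt0 (U V : ℕ → ℝ)
    (hU : ∀ t, 1 ≤ t → 0 ≤ U t) (hV : ∀ t, 1 ≤ t → 0 ≤ V t)
    (hUsum : ∑' t : ℕ, ENNReal.ofReal (U (t + 1)) < 1) :
    ((∃ C : ℝ, ∀ t, 1 ≤ t → V t ≤ C) → ∃ C' : ℝ, ∀ t : ℕ, lossSeq U V t ≤ C') ∧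
    (Tendsto V atTop (𝓝 0) → Tendsto (lossSeq U V) atTop (𝓝 0)) := by
  set f : ℕ → ℝ := fun k => U (k + 1) with hf
  have hf0 : ∀ k, 0 ≤ f k := fun k => hU (k + 1) (by omega)
  set x : ENNReal := ∑' t : ℕ, ENNReal.ofReal (U (t + 1)) with hx
  have hxtop : x ≠ ⊤ := hUsum.ne_top
  have hpart : ∀ n, ∑ i ∈ Finset.range n, f i ≤ x.toReal := by
    intro n
    have e1 : ∑ i ∈ Finset.range n, f i
        = (∑ i ∈ Finset.range n, ENNReal.ofReal (f i)).toReal := by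
      rw [ENNReal.toReal_sum (fun a _ => ENNReal.ofReal_ne_top)]
      exact (Finset.sum_congr rfl fun i _ => (ENNReal.toReal_ofReal (hf0 i)).symm)
    rw [e1]
    exact ENNReal.toReal_mono hxtop (ENNReal.sum_le_tsum _)
  have hfs : Summable f := summable_of_sum_range_le hf0 hpart
  set u : ℝ := ∑' k, f k with hu
  have hu0 : 0 ≤ u := tsum_nonneg hf0
  have hu1 : u < 1 := by
    have h1 : u ≤ x.toReal := Summable.tsum_le_of_sum_range_le hfs hpart
    have h2 : x.toReal < (1 : ENNReal).toReal :=
      (ENNReal.toReal_lt_toReal hxtop ENNReal.one_ne_top).mpr hUsum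
    rw [ENNReal.toReal_one] at h2
    linarith
  have hple : ∀ s : Finset ℕ, ∑ i ∈ s, f i ≤ u := fun s =>
    Summable.sum_le_tsum s (fun i _ => hf0 i) hfs
  set W : ℕ → ℝ := fun t => 2 * lossSeq U V t with hW
  have hrec : ∀ t, W t = V (t + 1) + ∑ s ∈ Finset.range t, U (t - s) * W s :=
    fun t => LossAux.two_lossSeq U V t
  -- nonnegativity of W
  have hW0 : ∀ t, 0 ≤ W t := by
    intro t
    induction t using Nat.strong_induction_on with
    | _ t ih =>
      rw [hrec t]
      have h1 : 0 ≤ V (t + 1) := hV (t + 1) (by omega)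
      have h2 : 0 ≤ ∑ s ∈ Finset.range t, U (t - s) * W s := by
        refine Finset.sum_nonneg fun s hs => ?_
        have hs' := Finset.mem_range.mp hs
        exact mul_nonneg (hU (t - s) (by omega)) (ih s hs')
      linarith
  -- sum reindexing lemmas
  have hIco : ∀ T t : ℕ, T ≤ t → ∑ s ∈ Finset.Ico T t, U (t - s)
      = ∑ i ∈ Finset.range (t - T), f i := by
    intro T t hTt
    rw [Finset.sum_Ico_eq_sum_range]
    have e : ∀ i ∈ Finset.range (t - T), U (t - (T + i)) = f (t - T - 1 - i) := by
      intro i hi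
      have hi' := Finset.mem_range.mp hi
      have : t - (T + i) = t - T - 1 - i + 1 := by omega
      rw [this]
    rw [Finset.sum_congr rfl e, Finset.sum_range_reflect]
  have hfirst : ∀ T t : ℕ, T ≤ t → ∑ s ∈ Finset.range T, U (t - s)
      = ∑ i ∈ Finset.range T, f (i + (t - T)) := by
    intro T t hTt
    have e : ∀ s ∈ Finset.range T, U (t - s) = (fun i => f (i + (t - T))) (T - 1 - s) := by
      intro s hs
      have hs' := Finset.mem_range.mp hs
      have : t - s = T - 1 - s + (t - T) + 1 := by omega
      simp only [hf]
      rw [this]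
    rw [Finset.sum_congr rfl e]
    exact Finset.sum_range_reflect (fun i => f (i + (t - T))) T
  -- the uniform bound
  have hbd : ∀ C : ℝ, 0 ≤ C → (∀ t, 1 ≤ t → V t ≤ C) → ∀ t, W t ≤ C / (1 - u) := by
    intro C hC0 hC t
    induction t using Nat.strong_induction_on with
    | _ t ih =>
      rw [hrec t]
      have h1 : V (t + 1) ≤ C := hC (t + 1) (by omega)
      have h2 : ∑ s ∈ Finset.range t, U (t - s) * W s
          ≤ ∑ s ∈ Finset.range t, U (t - s) * (C / (1 - u)) := by
        refine Finset.sum_le_sum fun s hs => ?_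
        have hs' := Finset.mem_range.mp hs
        exact mul_le_mul_of_nonneg_left (ih s hs') (hU (t - s) (by omega))
      have h3 : ∑ s ∈ Finset.range t, U (t - s) * (C / (1 - u))
          = (∑ s ∈ Finset.range t, U (t - s)) * (C / (1 - u)) := by
        rw [Finset.sum_mul]
      have h4 : ∑ s ∈ Finset.range t, U (t - s) ≤ u := by
        have := hIco 0 t (Nat.zero_le t)
        rw [Finset.range_eq_Ico, this]
        exact hple _
      have h5 : 0 ≤ C / (1 - u) := div_nonneg hC0 (by linarith)
      have h6 : (∑ s ∈ Finset.range t, U (t - s)) * (C / (1 - u)) ≤ u * (C / (1 - u)) :=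
        mul_le_mul_of_nonneg_right h4 h5
      have h7 : C + u * (C / (1 - u)) = C / (1 - u) := by
        have hne : (1 : ℝ) - u ≠ 0 := by linarith
        field_simp
        ring
      linarith
  constructor
  · -- boundedness
    rintro ⟨C, hC⟩
    have hC0 : 0 ≤ C := le_trans (hV 1 le_rfl) (hC 1 le_rfl)
    refine ⟨C / (1 - u) / 2, fun t => ?_⟩
    have := hbd C hC0 hC t
    simp only [hW] at this
    linarith
  · -- convergence
    intro hVt
    obtain ⟨C, hCmem⟩ := hVt.bddAbove_range
    have hC : ∀ t, V t ≤ C := fun t => hCmem (Set.mem_range_self t)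
    have hC0 : 0 ≤ C := le_trans (hV 1 le_rfl) (hC 1)
    set M : ℝ := C / (1 - u) with hM
    have hMb : ∀ t, W t ≤ M := hbd C hC0 (fun t _ => hC t)
    have hM0 : 0 ≤ M := le_trans (hW0 0) (hMb 0)
    have htail : Tendsto (fun n : ℕ => ∑' k, f (k + n)) atTop (𝓝 0) :=
      tendsto_sum_nat_add f
    -- main inductive claim
    have claim : ∀ k : ℕ, ∀ ε : ℝ, 0 < ε → ∃ T : ℕ, ∀ t, T ≤ t →
        W t ≤ u ^ k * M + (k : ℝ) * ε := by
      intro k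
      induction k with
      | zero => intro ε hε; exact ⟨0, fun t _ => by simpa using hMb t⟩
      | succ k ih =>
        intro ε hε
        obtain ⟨T, hT⟩ := ih ε hε
        -- eventually V (t+1) ≤ ε/2
        have hV2 : ∀ᶠ t : ℕ in atTop, V (t + 1) ≤ ε / 2 := by
          have h := Metric.tendsto_atTop.mp hVt (ε / 2) (by linarith)
          obtain ⟨N, hN⟩ := h
          refine eventually_atTop.mpr ⟨N, fun t ht => ?_⟩
          have := hN (t + 1) (by omega)
          rw [Real.dist_eq, sub_zero] at this
          have := le_abs_self (V (t + 1))
          linarith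
        -- eventually M * tail ≤ ε/2
        have htail2 : ∀ᶠ t : ℕ in atTop, M * (∑' i, f (i + (t - T))) ≤ ε / 2 := by
          have h1 : Tendsto (fun t : ℕ => M * ∑' i, f (i + (t - T))) atTop (𝓝 (M * 0)) :=
            (htail.comp (tendsto_sub_atTop_nat T)).const_mul M
          rw [mul_zero] at h1
          have h2 := Metric.tendsto_atTop.mp h1 (ε / 2) (by linarith)
          obtain ⟨N, hN⟩ := h2
          refine eventually_atTop.mpr ⟨N, fun t ht => ?_⟩
          have := hN t ht
          rw [Real.dist_eq, sub_zero] at this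
          have := le_abs_self (M * ∑' i, f (i + (t - T)))
          linarith
        obtain ⟨N, hN⟩ := eventually_atTop.mp (hV2.and htail2)
        refine ⟨max (T + 1) N, fun t ht => ?_⟩
        have hTt : T ≤ t := by omega
        have hNt : N ≤ t := by omega
        obtain ⟨hVc, hTc⟩ := hN t hNt
        -- split the sum
        have hsplit : ∑ s ∈ Finset.range t, U (t - s) * W s
            = ∑ s ∈ Finset.range T, U (t - s) * W s
              + ∑ s ∈ Finset.Ico T t, U (t - s) * W s := by
          rw [Finset.range_eq_Ico, ← Finset.sum_Ico_consecutive _ (Nat.zero_le T) hTt,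
            ← Finset.range_eq_Ico]
        -- first part
        have hb1 : ∑ s ∈ Finset.range T, U (t - s) * W s ≤ ε / 2 := by
          have h1 : ∑ s ∈ Finset.range T, U (t - s) * W s
              ≤ ∑ s ∈ Finset.range T, U (t - s) * M := by
            refine Finset.sum_le_sum fun s hs => ?_
            have hs' := Finset.mem_range.mp hs
            exact mul_le_mul_of_nonneg_left (hMb s) (hU (t - s) (by omega))
          have h2 : ∑ s ∈ Finset.range T, U (t - s) * M
              = (∑ i ∈ Finset.range T, f (i + (t - T))) * M := by
            rw [← Finset.sum_mul, hfirst T t hTt]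
          have h3 : (∑ i ∈ Finset.range T, f (i + (t - T))) * M
              ≤ (∑' i, f (i + (t - T))) * M := by
            refine mul_le_mul_of_nonneg_right ?_ hM0
            exact Summable.sum_le_tsum _ (fun i _ => hf0 _) ((summable_nat_add_iff (t - T)).mpr hfs)
          linarith [hTc, h1, h2.le, h2.ge, h3, mul_comm M (∑' i, f (i + (t - T)))]
        -- second part
        have hkE : 0 ≤ u ^ k * M + (k : ℝ) * ε := by positivity
        have hb2 : ∑ s ∈ Finset.Ico T t, U (t - s) * W s
            ≤ u * (u ^ k * M + (k : ℝ) * ε) := by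
          have h1 : ∑ s ∈ Finset.Ico T t, U (t - s) * W s
              ≤ ∑ s ∈ Finset.Ico T t, U (t - s) * (u ^ k * M + (k : ℝ) * ε) := by
            refine Finset.sum_le_sum fun s hs => ?_
            obtain ⟨hs1, hs2⟩ := Finset.mem_Ico.mp hs
            exact mul_le_mul_of_nonneg_left (hT s hs1) (hU (t - s) (by omega))
          have h2 : ∑ s ∈ Finset.Ico T t, U (t - s) * (u ^ k * M + (k : ℝ) * ε)
              = (∑ s ∈ Finset.Ico T t, U (t - s)) * (u ^ k * M + (k : ℝ) * ε) := by
            rw [Finset.sum_mul]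
          have h3 : ∑ s ∈ Finset.Ico T t, U (t - s) ≤ u := by
            rw [hIco T t hTt]; exact hple _
          have h4 := mul_le_mul_of_nonneg_right h3 hkE
          linarith
        have hfin : u * (u ^ k * M + (k : ℝ) * ε) ≤ u ^ (k + 1) * M + (k : ℝ) * ε := by
          have e1 : u * (u ^ k * M) = u ^ (k + 1) * M := by ring
          have e2 : u * ((k : ℝ) * ε) ≤ (k : ℝ) * ε := by
            have hk0 : 0 ≤ (k : ℝ) * ε := by positivity
            nlinarith
          nlinarith [e2]
        have := hrec t
        have hcast : ((k : ℝ) + 1) * ε = (k : ℝ) * ε + ε := by ring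
        push_cast
        rw [hrec t, hsplit]
        linarith
    -- conclude
    rw [Metric.tendsto_atTop]
    intro ε' hε'
    have hpow : Tendsto (fun k : ℕ => u ^ k * M) atTop (𝓝 0) := by
      have := (tendsto_pow_atTop_nhds_zero_of_lt_one hu0 hu1).mul_const M
      rwa [zero_mul] at this
    have hev : ∀ᶠ k : ℕ in atTop, u ^ k * M < ε' / 2 := by
      have h2 := Metric.tendsto_atTop.mp hpow (ε' / 2) (by linarith)
      obtain ⟨N, hN⟩ := h2
      refine eventually_atTop.mpr ⟨N, fun k hk => ?_⟩
      have := hN k hk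
      rw [Real.dist_eq, sub_zero] at this
      have := le_abs_self (u ^ k * M)
      linarith
    obtain ⟨k, hk⟩ := hev.exists
    have hεk : 0 < ε' / (2 * ((k : ℝ) + 1)) := by positivity
    obtain ⟨T, hT⟩ := claim k (ε' / (2 * ((k : ℝ) + 1))) hεk
    refine ⟨T, fun t ht => ?_⟩
    have h1 := hT t ht
    have h2 : (k : ℝ) * (ε' / (2 * ((k : ℝ) + 1))) ≤ ε' / 2 := by
      have hk0 : (0 : ℝ) ≤ (k : ℝ) := Nat.cast_nonneg k
      rw [mul_div_assoc', div_le_div_iff₀ (by positivity) (by norm_num)]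
      nlinarith
    have hWt : W t < ε' := by linarith
    have hW0t := hW0 t
    rw [Real.dist_eq, sub_zero]
    have : lossSeq U V t = W t / 2 := by simp only [hW]; ring
    rw [this, abs_of_nonneg (by linarith)]
    linarith
end

section
/- Assume U_Σ > 1 (possibly U_Σ = ∞) and that V_t > 0 for at least one index t ≥ 1. Then sup_{t≥0} L_t = ∞. -/
open Filter Topology
open scoped Classical

namespace Stmt1Aux

variable {U V : ℕ → ℝ}

lemma term_nonneg (hU : ∀ t, 1 ≤ t → 0 ≤ U t) (hV : ∀ t, 1 ≤ t → 0 ≤ V t)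
    {t m : ℕ} {τ : Fin (m + 1) → Fin (t + 1)} (hτ : StrictMono τ) (h0 : 0 < (τ 0 : ℕ)) :
    0 ≤ U ((t + 1) - (τ (Fin.last m) : ℕ)) *
      (∏ j : Fin m, U ((τ j.succ : ℕ) - (τ j.castSucc : ℕ))) * V (τ 0) := by
  apply mul_nonneg (mul_nonneg ?_ ?_) ?_
  · apply hU
    have := (τ (Fin.last m)).isLt
    omega
  · apply Finset.prod_nonneg
    intro j _
    apply hU
    have : (τ j.castSucc : ℕ) < (τ j.succ : ℕ) := hτ (Fin.castSucc_lt_succ : j.castSucc < j.succ)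
    omega
  · exact hV _ h0

lemma inner_nonneg (hU : ∀ t, 1 ≤ t → 0 ≤ U t) (hV : ∀ t, 1 ≤ t → 0 ≤ V t)
    (t m : ℕ) :
    0 ≤ ∑ τ ∈ Finset.univ.filter
          (fun τ : Fin (m + 1) → Fin (t + 1) => StrictMono τ ∧ 0 < (τ 0 : ℕ)),
        U ((t + 1) - (τ (Fin.last m) : ℕ)) *
          (∏ j : Fin m, U ((τ j.succ : ℕ) - (τ j.castSucc : ℕ))) * V (τ 0) := by
  apply Finset.sum_nonneg
  intro τ hτ
  obtain ⟨-, h1, h2⟩ := Finset.mem_filter.mp hτ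
  exact term_nonneg hU hV h1 h2

def ext' (m : ℕ) (d : Fin (m + 1) → ℕ) (i : ℕ) : ℕ :=
  if h : i < m + 1 then d ⟨i, h⟩ else 0

lemma ext'_fin (m : ℕ) (d : Fin (m + 1) → ℕ) (i : Fin (m + 1)) : ext' m d i = d i := by
  simp [ext']
  intro h
  have := i.isLt
  omega

lemma sum_ext' (m : ℕ) (d : Fin (m + 1) → ℕ) :
    ∑ i ∈ Finset.range (m + 1), ext' m d i = ∑ i, d i := by
  rw [← Fin.sum_univ_eq_sum_range]
  exact Finset.sum_congr rfl fun i _ => ext'_fin m d i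

lemma partial_lt (m : ℕ) (d : Fin (m + 1) → ℕ) (hd1 : ∀ i, 1 ≤ d i) :
    ∀ a b : ℕ, a < b → b ≤ m + 1 →
      ∑ i ∈ Finset.range a, ext' m d i < ∑ i ∈ Finset.range b, ext' m d i := by
  intro a b hab hb
  induction b with
  | zero => omega
  | succ n ih =>
    have hn : n < m + 1 := by omega
    have h1 : 1 ≤ ext' m d n := by
      have := hd1 ⟨n, hn⟩
      simpa [ext', hn] using this
    rw [Finset.sum_range_succ]
    rcases Nat.lt_or_ge a n with h | h
    · have := ih h (by omega); omega
    · have : a = n := by omega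
      subst this
      omega

lemma key (hU : ∀ t, 1 ≤ t → 0 ≤ U t) (hV : ∀ t, 1 ≤ t → 0 ≤ V t)
    (t0 N : ℕ) (ht0 : 1 ≤ t0) (hN : 1 ≤ N) (m : ℕ) :
    ∃ t : ℕ,
      V t0 * (∑ x ∈ Finset.Icc 1 N, U x) ^ (m + 1) / (2 * (((m + 1) * N : ℕ) : ℝ))
        ≤ lossSeq U V t := by
  classical
  set S : ℝ := ∑ x ∈ Finset.Icc 1 N, U x with hSdef
  set D : Finset (Fin (m + 1) → ℕ) := Fintype.piFinset (fun _ => Finset.Icc 1 N) with hDdef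
  have hUnn : ∀ x ∈ Finset.Icc 1 N, 0 ≤ U x := fun x hx => hU x (Finset.mem_Icc.mp hx).1
  have hSnn : 0 ≤ S := Finset.sum_nonneg hUnn
  have hVnn : 0 ≤ V t0 := hV t0 ht0
  have hDsum : ∑ d ∈ D, ∏ i, U (d i) = S ^ (m + 1) := by
    rw [hDdef, ← Finset.prod_univ_sum]
    simp [hSdef]
  set tmap : (Fin (m + 1) → ℕ) → ℕ := fun d => t0 - 1 + ∑ i, d i with htmapdef
  set T : Finset ℕ := Finset.Icc (t0 + m) (t0 - 1 + (m + 1) * N) with hTdef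
  have hmem : ∀ d ∈ D, (∀ i, 1 ≤ d i) ∧ (∀ i, d i ≤ N) := by
    intro d hd
    rw [hDdef, Fintype.mem_piFinset] at hd
    exact ⟨fun i => (Finset.mem_Icc.mp (hd i)).1, fun i => (Finset.mem_Icc.mp (hd i)).2⟩
  have hsum_bounds : ∀ d ∈ D, m + 1 ≤ ∑ i, d i ∧ ∑ i, d i ≤ (m + 1) * N := by
    intro d hd
    obtain ⟨h1, h2⟩ := hmem d hd
    constructor
    · calc m + 1 = Finset.univ.card * 1 := by simp
        _ ≤ ∑ i, d i := Finset.card_nsmul_le_sum _ _ _ (fun i _ => h1 i)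
    · calc ∑ i, d i ≤ Finset.univ.card * N :=
            Finset.sum_le_card_nsmul _ _ _ (fun i _ => h2 i)
        _ = (m + 1) * N := by simp
  have htmapT : ∀ d ∈ D, tmap d ∈ T := by
    intro d hd
    obtain ⟨h1, h2⟩ := hsum_bounds d hd
    have hre : tmap d = t0 - 1 + ∑ i, d i := rfl
    rw [hTdef, Finset.mem_Icc]
    omega
  -- fiberwise bound
  have claim2 : ∀ t ∈ T, V t0 * ∑ d ∈ D.filter (fun d => tmap d = t), ∏ i, U (d i)
      ≤ 2 * lossSeq U V t := by
    intro t ht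
    have hmt : m < t := by
      rw [hTdef, Finset.mem_Icc] at ht
      omega
    set F : (Fin (m + 1) → ℕ) → (Fin (m + 1) → Fin (t + 1)) := fun d j =>
      ⟨min (t0 + ∑ i ∈ Finset.range j, ext' m d i) t, by omega⟩ with hFdef
    have hfiber : ∀ d ∈ D.filter (fun d => tmap d = t),
        (∀ i, 1 ≤ d i) ∧ t0 + ∑ i ∈ Finset.range (m + 1), ext' m d i = t + 1 := by
      intro d hd
      obtain ⟨hdD, hdt⟩ := Finset.mem_filter.mp hd
      refine ⟨(hmem d hdD).1, ?_⟩
      rw [sum_ext']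
      have hre : tmap d = t0 - 1 + ∑ i, d i := rfl
      have := (hsum_bounds d hdD).1
      omega
    have hFval : ∀ d ∈ D.filter (fun d => tmap d = t), ∀ j : Fin (m + 1),
        (F d j : ℕ) = t0 + ∑ i ∈ Finset.range j, ext' m d i := by
      intro d hd j
      obtain ⟨hd1, htot⟩ := hfiber d hd
      have hlt := partial_lt m d hd1 j (m + 1) j.isLt le_rfl
      have hle : t0 + ∑ i ∈ Finset.range (j : ℕ), ext' m d i ≤ t := by omega
      show min (t0 + ∑ i ∈ Finset.range (j : ℕ), ext' m d i) t = _
      exact min_eq_left hle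
    have hFmem : ∀ d ∈ D.filter (fun d => tmap d = t),
        F d ∈ Finset.univ.filter
          (fun τ : Fin (m + 1) → Fin (t + 1) => StrictMono τ ∧ 0 < (τ 0 : ℕ)) := by
      intro d hd
      obtain ⟨hd1, htot⟩ := hfiber d hd
      rw [Finset.mem_filter]
      refine ⟨Finset.mem_univ _, ?_, ?_⟩
      · intro j k hjk
        show (F d j : ℕ) < (F d k : ℕ)
        rw [hFval d hd j, hFval d hd k]
        have := partial_lt m d hd1 j k hjk (by omega)
        omega
      · show 0 < (F d 0 : ℕ)
        rw [hFval d hd 0]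
        omega
    have hterm : ∀ d ∈ D.filter (fun d => tmap d = t),
        U ((t + 1) - (F d (Fin.last m) : ℕ)) *
          (∏ j : Fin m, U ((F d j.succ : ℕ) - (F d j.castSucc : ℕ))) * V (F d 0)
          = (∏ i, U (d i)) * V t0 := by
      intro d hd
      obtain ⟨hd1, htot⟩ := hfiber d hd
      have h0 : ((F d 0 : ℕ) : ℕ) = t0 := by
        have := hFval d hd 0
        simpa using this
      have hlast : (t + 1) - (F d (Fin.last m) : ℕ) = d (Fin.last m) := by
        rw [hFval d hd (Fin.last m)]
        have hsucc := Finset.sum_range_succ (ext' m d) m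
        have hext : ext' m d m = d (Fin.last m) := by
          simp [ext', Fin.last]
        simp only [Fin.val_last]
        omega
      have hstep : ∀ j : Fin m, (F d j.succ : ℕ) - (F d j.castSucc : ℕ) = d j.castSucc := by
        intro j
        rw [hFval d hd j.succ, hFval d hd j.castSucc]
        simp only [Fin.val_succ, Fin.coe_castSucc]
        rw [Finset.sum_range_succ]
        have hext : ext' m d j = d j.castSucc := by
          have hj : (j : ℕ) < m + 1 := by omega
          simp only [ext', hj, dif_pos]
          congr
        omega
      rw [hlast, h0]
      have : (∏ j : Fin m, U ((F d j.succ : ℕ) - (F d j.castSucc : ℕ)))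
          = ∏ j : Fin m, U (d j.castSucc) :=
        Finset.prod_congr rfl fun j _ => by rw [hstep j]
      rw [this]
      rw [show (∏ i, U (d i)) = (∏ j : Fin m, U (d j.castSucc)) * U (d (Fin.last m)) from
        Fin.prod_univ_castSucc _]
      ring
    have hinj : Set.InjOn F (D.filter (fun d => tmap d = t)) := by
      intro d hd e he hFde
      obtain ⟨hd1, htotd⟩ := hfiber d hd
      obtain ⟨he1, htote⟩ := hfiber e he
      have hsum_eq : ∀ j : ℕ, j ≤ m + 1 →
          ∑ i ∈ Finset.range j, ext' m d i = ∑ i ∈ Finset.range j, ext' m e i := by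
        intro j hj
        rcases Nat.lt_or_ge j (m + 1) with h | h
        · have h4 : (F d ⟨j, h⟩ : ℕ) = (F e ⟨j, h⟩ : ℕ) := by
            rw [congrFun hFde (⟨j, h⟩ : Fin (m + 1))]
          rw [hFval d hd ⟨j, h⟩, hFval e he ⟨j, h⟩] at h4
          simp only [Fin.val_mk] at h4
          omega
        · have : j = m + 1 := by omega
          subst this
          omega
      funext i
      have h1 := hsum_eq i.val (by omega)
      have h2 := hsum_eq (i.val + 1) (by omega)
      rw [Finset.sum_range_succ, Finset.sum_range_succ] at h2
      have h3 : ext' m d i = ext' m e i := by omega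
      rw [ext'_fin, ext'_fin] at h3
      exact h3
    -- now the sum chain
    have hsub : (D.filter (fun d => tmap d = t)).image F ⊆
        Finset.univ.filter
          (fun τ : Fin (m + 1) → Fin (t + 1) => StrictMono τ ∧ 0 < (τ 0 : ℕ)) := by
      intro τ hτ
      obtain ⟨d, hd, rfl⟩ := Finset.mem_image.mp hτ
      exact hFmem d hd
    have h1 : ∑ d ∈ D.filter (fun d => tmap d = t), (∏ i, U (d i)) * V t0
        = ∑ τ ∈ (D.filter (fun d => tmap d = t)).image F,
            U ((t + 1) - (τ (Fin.last m) : ℕ)) *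
              (∏ j : Fin m, U ((τ j.succ : ℕ) - (τ j.castSucc : ℕ))) * V (τ 0) := by
      rw [Finset.sum_image (fun x hx y hy h => hinj hx hy h)]
      exact (Finset.sum_congr rfl fun d hd => (hterm d hd)).symm
    have h2 : ∑ τ ∈ (D.filter (fun d => tmap d = t)).image F,
            U ((t + 1) - (τ (Fin.last m) : ℕ)) *
              (∏ j : Fin m, U ((τ j.succ : ℕ) - (τ j.castSucc : ℕ))) * V (τ 0)
        ≤ ∑ τ ∈ Finset.univ.filter
            (fun τ : Fin (m + 1) → Fin (t + 1) => StrictMono τ ∧ 0 < (τ 0 : ℕ)),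
            U ((t + 1) - (τ (Fin.last m) : ℕ)) *
              (∏ j : Fin m, U ((τ j.succ : ℕ) - (τ j.castSucc : ℕ))) * V (τ 0) := by
      apply Finset.sum_le_sum_of_subset_of_nonneg hsub
      intro τ hτ _
      obtain ⟨-, ha, hb⟩ := Finset.mem_filter.mp hτ
      exact term_nonneg hU hV ha hb
    have h3 : ∑ τ ∈ Finset.univ.filter
            (fun τ : Fin (m + 1) → Fin (t + 1) => StrictMono τ ∧ 0 < (τ 0 : ℕ)),
            U ((t + 1) - (τ (Fin.last m) : ℕ)) *
              (∏ j : Fin m, U ((τ j.succ : ℕ) - (τ j.castSucc : ℕ))) * V (τ 0)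
        ≤ ∑ m' ∈ Finset.range t,
            ∑ τ ∈ Finset.univ.filter
              (fun τ : Fin (m' + 1) → Fin (t + 1) => StrictMono τ ∧ 0 < (τ 0 : ℕ)),
              U ((t + 1) - (τ (Fin.last m') : ℕ)) *
                (∏ j : Fin m', U ((τ j.succ : ℕ) - (τ j.castSucc : ℕ))) * V (τ 0) :=
      Finset.single_le_sum (fun m' _ => inner_nonneg hU hV t m') (Finset.mem_range.mpr hmt)
    have h4 : 0 ≤ V (t + 1) := hV _ (by omega)
    have h5 : 2 * lossSeq U V t = V (t + 1) +
        ∑ m' ∈ Finset.range t,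
            ∑ τ ∈ Finset.univ.filter
              (fun τ : Fin (m' + 1) → Fin (t + 1) => StrictMono τ ∧ 0 < (τ 0 : ℕ)),
              U ((t + 1) - (τ (Fin.last m') : ℕ)) *
                (∏ j : Fin m', U ((τ j.succ : ℕ) - (τ j.castSucc : ℕ))) * V (τ 0) := by
      unfold lossSeq; ring
    have h6 : V t0 * ∑ d ∈ D.filter (fun d => tmap d = t), ∏ i, U (d i)
        = ∑ d ∈ D.filter (fun d => tmap d = t), (∏ i, U (d i)) * V t0 := by
      rw [Finset.mul_sum]
      exact Finset.sum_congr rfl fun d _ => by ring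
    rw [h6, h5, h1]
    linarith [h2, h3, h4]
  -- sum over T
  have hsumT : V t0 * S ^ (m + 1) ≤ ∑ t ∈ T, 2 * lossSeq U V t := by
    calc V t0 * S ^ (m + 1) = V t0 * ∑ d ∈ D, ∏ i, U (d i) := by rw [hDsum]
      _ = ∑ t ∈ T, V t0 * ∑ d ∈ D.filter (fun d => tmap d = t), ∏ i, U (d i) := by
          rw [← Finset.sum_fiberwise_of_maps_to htmapT (fun d => ∏ i, U (d i)),
            Finset.mul_sum]
      _ ≤ ∑ t ∈ T, 2 * lossSeq U V t := Finset.sum_le_sum claim2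
  have hcard : T.card = (m + 1) * N - m := by
    rw [hTdef, Nat.card_Icc]
    omega
  have hcardpos : 0 < T.card := by
    rw [hcard]
    have : m + 1 ≤ (m + 1) * N := Nat.le_mul_of_pos_right _ hN
    omega
  have hTne : T.Nonempty := Finset.card_pos.mp hcardpos
  have hconst : ∑ t ∈ T, (V t0 * S ^ (m + 1) / (T.card : ℝ)) = V t0 * S ^ (m + 1) := by
    rw [Finset.sum_const, nsmul_eq_mul, mul_comm,
      div_mul_cancel₀ _ (show (T.card : ℝ) ≠ 0 from (Nat.cast_pos.mpr hcardpos).ne')]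
  have havg : ∑ t ∈ T, (V t0 * S ^ (m + 1) / (T.card : ℝ)) ≤ ∑ t ∈ T, 2 * lossSeq U V t := by
    rw [hconst]; exact hsumT
  obtain ⟨t, htT, hle⟩ := Finset.exists_le_of_sum_le hTne havg
  refine ⟨t, ?_⟩
  have hcardle : (T.card : ℝ) ≤ (((m + 1) * N : ℕ) : ℝ) := by
    exact_mod_cast (by rw [hcard]; omega : T.card ≤ (m + 1) * N)
  have hcardposR : (0 : ℝ) < (T.card : ℝ) := by exact_mod_cast hcardpos
  have hdiv : V t0 * S ^ (m + 1) / (((m + 1) * N : ℕ) : ℝ)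
      ≤ V t0 * S ^ (m + 1) / (T.card : ℝ) :=
    div_le_div_of_nonneg_left (by positivity) hcardposR hcardle
  have := le_trans hdiv hle
  have hfin : V t0 * S ^ (m + 1) / (2 * (((m + 1) * N : ℕ) : ℝ))
      = (V t0 * S ^ (m + 1) / (((m + 1) * N : ℕ) : ℝ)) / 2 := by
    have hKpos : (0 : ℝ) < (((m + 1) * N : ℕ) : ℝ) := lt_of_lt_of_le hcardposR hcardle
    rw [div_div]
    ring_nf
  rw [hfin]
  linarith [hle, this]

end Stmt1Aux

/-- If `U_Σ > 1` (possibly `∞`) and `V_t > 0` for at least one `t ≥ 1`,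
then `sup_t L_t = ∞`, i.e. the loss sequence is unbounded. -/
theorem stmt1 (U V : ℕ → ℝ)
    (hU : ∀ t, 1 ≤ t → 0 ≤ U t) (hV : ∀ t, 1 ≤ t → 0 ≤ V t)
    (hUsum : 1 < ∑' t : ℕ, ENNReal.ofReal (U (t + 1)))
    (hVpos : ∃ t, 1 ≤ t ∧ 0 < V t) :
    ∀ C : ℝ, ∃ t : ℕ, C < lossSeq U V t := by
  classical
  obtain ⟨t0, ht0, hV0⟩ := hVpos
  -- extract a finite partial sum exceeding 1
  rw [ENNReal.tsum_eq_iSup_sum, lt_iSup_iff] at hUsum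
  obtain ⟨Fs, hFs⟩ := hUsum
  set N : ℕ := Fs.sup id + 1 with hNdef
  have hN : 1 ≤ N := by omega
  have hFsub : Fs ⊆ Finset.range N := by
    intro x hx
    rw [Finset.mem_range, hNdef]
    have : x ≤ Fs.sup id := Finset.le_sup (f := id) hx
    omega
  have h2 : ∑ i ∈ Fs, ENNReal.ofReal (U (i + 1))
      ≤ ∑ i ∈ Finset.range N, ENNReal.ofReal (U (i + 1)) :=
    Finset.sum_le_sum_of_subset hFsub
  have h3 : ∑ i ∈ Finset.range N, ENNReal.ofReal (U (i + 1))
      = ENNReal.ofReal (∑ i ∈ Finset.range N, U (i + 1)) :=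
    (ENNReal.ofReal_sum_of_nonneg (fun i _ => hU (i + 1) (by omega))).symm
  have h4 : (1 : ℝ) < ∑ i ∈ Finset.range N, U (i + 1) := by
    have := lt_of_lt_of_le hFs h2
    rw [h3] at this
    by_contra hcon
    push_neg at hcon
    have : ENNReal.ofReal (∑ i ∈ Finset.range N, U (i + 1)) ≤ 1 := by
      calc ENNReal.ofReal (∑ i ∈ Finset.range N, U (i + 1)) ≤ ENNReal.ofReal 1 :=
            ENNReal.ofReal_le_ofReal hcon
        _ = 1 := ENNReal.ofReal_one
    exact absurd this (not_le.mpr ‹1 < ENNReal.ofReal _›)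
  set S : ℝ := ∑ x ∈ Finset.Icc 1 N, U x with hSdef
  have hSeq : S = ∑ i ∈ Finset.range N, U (i + 1) := by
    rw [hSdef, ← Finset.Ico_add_one_right_eq_Icc, Finset.sum_Ico_eq_sum_range]
    exact Finset.sum_congr rfl fun i _ => by rw [add_comm]
  have hS1 : 1 < S := by rw [hSeq]; exact h4
  -- growth argument
  intro C
  set r : ℝ := Real.sqrt S with hrdef
  have hSnn : (0 : ℝ) ≤ S := le_trans zero_le_one hS1.le
  have hr2 : r ^ 2 = S := Real.sq_sqrt hSnn
  have hr1 : 1 < r := by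
    nlinarith [Real.sqrt_nonneg S, Real.sq_sqrt hSnn]
  set ε : ℝ := r - 1 with hεdef
  have hε : 0 < ε := by simp [hεdef]; linarith
  have hVε : 0 < V t0 * ε ^ 2 := by positivity
  have hNR : (0 : ℝ) < (N : ℝ) := by exact_mod_cast hN
  obtain ⟨m, hm⟩ := exists_nat_gt (C * (2 * N) / (V t0 * ε ^ 2))
  obtain ⟨t, hle⟩ := Stmt1Aux.key hU hV t0 N ht0 hN m
  refine ⟨t, lt_of_lt_of_le ?_ hle⟩
  -- show C < V t0 * S ^ (m+1) / (2 * ((m+1)*N))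
  have hpow : ((m : ℝ) + 1) * ε ≤ r ^ (m + 1) := by
    have h := one_add_mul_le_pow (a := ε) (by linarith) (m + 1)
    have : (1 : ℝ) + (↑(m + 1)) * ε ≤ (1 + ε) ^ (m + 1) := h
    have he : (1 : ℝ) + ε = r := by rw [hεdef]; ring
    push_cast at this
    rw [he] at this
    linarith
  have hSpow : ((m : ℝ) + 1) ^ 2 * ε ^ 2 ≤ S ^ (m + 1) := by
    have h1 : (0 : ℝ) ≤ ((m : ℝ) + 1) * ε := by positivity
    have h2 : (((m : ℝ) + 1) * ε) ^ 2 ≤ (r ^ (m + 1)) ^ 2 := by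
      apply sq_le_sq' <;> nlinarith
    calc ((m : ℝ) + 1) ^ 2 * ε ^ 2 = (((m : ℝ) + 1) * ε) ^ 2 := by ring
      _ ≤ (r ^ (m + 1)) ^ 2 := h2
      _ = (r ^ 2) ^ (m + 1) := by rw [← pow_mul, ← pow_mul, mul_comm]
      _ = S ^ (m + 1) := by rw [hr2]
  have hKcast : (((m + 1) * N : ℕ) : ℝ) = ((m : ℝ) + 1) * (N : ℝ) := by push_cast; ring
  have hKpos : (0 : ℝ) < ((m : ℝ) + 1) * (N : ℝ) := by positivity
  have hC1 : C * (2 * N) < ((m : ℝ) + 1) * (V t0 * ε ^ 2) := by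
    rw [div_lt_iff₀ hVε] at hm
    nlinarith
  have hC2 : C < V t0 * (((m : ℝ) + 1) ^ 2 * ε ^ 2) / (2 * (((m : ℝ) + 1) * N)) := by
    rw [lt_div_iff₀ (by positivity)]
    nlinarith
  have hmono : V t0 * (((m : ℝ) + 1) ^ 2 * ε ^ 2) / (2 * (((m : ℝ) + 1) * N))
      ≤ V t0 * S ^ (m + 1) / (2 * (((m + 1) * N : ℕ) : ℝ)) := by
    rw [hKcast]
    have hnum : V t0 * (((m : ℝ) + 1) ^ 2 * ε ^ 2) ≤ V t0 * S ^ (m + 1) :=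
      mul_le_mul_of_nonneg_left hSpow hV0.le
    exact (div_le_div_iff_of_pos_right (by positivity)).mpr hnum
  exact lt_of_lt_of_le hC2 hmono
end

section
/- The rational functions P/Q and Ψ^{(M)} coincide: P(μ)/Q(μ) = Ψ^{(M)}(μ) for every μ ∈ ℂ at which both sides are defined (i.e., outside the finitely many zeros of the respective denominators). -/
open Filter Topology Matrix

/-- The `(M+1)×(M+1)` transition matrix `S_λ` whose first row is `(1−λα, bᵀ)`
and whose remaining `M` rows form the block `(λc, D)`. -/
noncomputable def Smat {M : ℕ} (D : Matrix (Fin M) (Fin M) ℝ) (b c : Fin M → ℝ)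
    (α lam : ℝ) : Matrix (Fin (M + 1)) (Fin (M + 1)) ℝ :=
  Matrix.of fun i j =>
    Fin.cases
      (Fin.cases (1 - lam * α) (fun j' => b j') j)
      (fun i' => Fin.cases (lam * c i') (fun j' => D i' j') j) i

lemma aeval_charpoly_eq' {n : ℕ} (S : Matrix (Fin n) (Fin n) ℝ) (μ : ℂ) :
    Polynomial.aeval μ S.charpoly =
      (Matrix.scalar (Fin n) μ - S.map (algebraMap ℝ ℂ)).det := by
  have h1 := RingHom.map_det (Polynomial.aeval μ : Polynomial ℝ →ₐ[ℝ] ℂ).toRingHom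
    (Matrix.charmatrix S)
  rw [Matrix.charpoly]
  rw [show ((Polynomial.aeval μ : Polynomial ℝ →ₐ[ℝ] ℂ).toRingHom : Polynomial ℝ → ℂ)
      = (Polynomial.aeval μ : Polynomial ℝ → ℂ) from rfl] at h1
  rw [h1]
  congr 1
  ext i j
  rcases eq_or_ne i j with rfl | hij
  · simp [Matrix.charmatrix_apply_eq, Matrix.scalar_apply, Polynomial.aeval_C]
  · simp [Matrix.charmatrix_apply_ne _ _ _ hij, Matrix.scalar_apply,
      Matrix.diagonal_apply_ne _ hij, Polynomial.aeval_C]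

lemma det_border' {M : ℕ} (d bb cc : Fin M → ℂ) (a0 μ : ℂ)
    (hd : ∀ m, μ - d m ≠ 0) :
    (Matrix.fromBlocks (Matrix.of fun _ _ : Fin 1 => a0)
      (Matrix.of fun (_ : Fin 1) j => -bb j)
      (Matrix.of fun i (_ : Fin 1) => -cc i)
      (Matrix.diagonal fun m => μ - d m)).det
    = (∏ m, (μ - d m)) * (a0 - ∑ m, bb m * cc m * (μ - d m)⁻¹) := by
  haveI : Invertible (Matrix.diagonal fun m => μ - d m) :=
    Matrix.invertibleOfIsUnitDet _ (by
      rw [Matrix.det_diagonal]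
      exact (Finset.prod_ne_zero_iff.2 fun m _ => hd m).isUnit)
  have hinv : ⅟(Matrix.diagonal fun m => μ - d m)
      = Matrix.diagonal (fun m => (μ - d m)⁻¹) :=
    invOf_eq_right_inv (by
      rw [Matrix.diagonal_mul_diagonal]
      rw [show (fun m => (μ - d m) * (μ - d m)⁻¹) = fun _ => (1:ℂ) from
        funext fun m => mul_inv_cancel₀ (hd m), Matrix.diagonal_one])
  rw [Matrix.det_fromBlocks₂₂, hinv, Matrix.det_diagonal, Matrix.det_fin_one]
  congr 1
  simp only [Matrix.sub_apply, Matrix.mul_apply, Matrix.diagonal_apply,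
    Matrix.of_apply, mul_ite, mul_zero, Finset.sum_ite_eq', Finset.mem_univ, if_true]
  congr 1
  exact Finset.sum_congr rfl fun m _ => by ring

lemma geom_exp' (θ h : ℝ) (hθ2 : θ < 2) (hh0 : 0 < h) (M : ℕ) :
    ∑ m ∈ Finset.range M, Real.exp (-((2 - θ) * ((m : ℝ) + 1/2) * h))
      = ((1 - Real.exp (-((2 - θ) * M * h))) / (1 - Real.exp (-((2 - θ) * h)))) *
        Real.exp (-((2 - θ) * h / 2)) := by
  set r := Real.exp (-((2 - θ) * h)) with hr
  have hr1 : r ≠ 1 := by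
    have hlt : -((2 - θ) * h) < 0 := by nlinarith
    exact ne_of_lt (by simpa [hr] using Real.exp_lt_one_iff.mpr hlt)
  have hterm : ∀ m : ℕ, Real.exp (-((2 - θ) * ((m : ℝ) + 1/2) * h))
      = r ^ m * Real.exp (-((2 - θ) * h / 2)) := by
    intro m
    rw [hr, ← Real.exp_nat_mul, ← Real.exp_add]
    congr 1; ring
  have hrM : Real.exp (-((2 - θ) * (M : ℝ) * h)) = r ^ M := by
    rw [hr, ← Real.exp_nat_mul]; congr 1; ring
  calc ∑ m ∈ Finset.range M, Real.exp (-((2 - θ) * ((m : ℝ) + 1/2) * h))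
      = (∑ m ∈ Finset.range M, r ^ m) * Real.exp (-((2 - θ) * h / 2)) := by
        rw [Finset.sum_mul]; exact Finset.sum_congr rfl fun m _ => hterm m
    _ = ((r ^ M - 1) / (r - 1)) * Real.exp (-((2 - θ) * h / 2)) := by
        rw [geom_sum_eq hr1]
    _ = _ := by
        rw [hrM, show (r ^ M - 1) / (r - 1) = (1 - r ^ M) / (1 - r) from by
          rw [← neg_div_neg_eq, neg_sub, neg_sub]]

/-- The characteristic pair `P/Q` of the discretized corner algorithm coincides with
the rational function `Ψ^{(M)}(μ) = A·((θ−2)h·Σ_{m=1}^M e^{−(2−θ)(m−1/2)h}/(μ−1+e^{−(m−1/2)h}))⁻¹·(μ−1)/μ`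
wherever both sides are defined. The summation index `m ∈ Finset.range M` represents
the paper's `m − 1` (so `(m − 1/2)h` becomes `(m + 1/2)h`). -/
theorem stmt9 (θ A l : ℝ) (hθ1 : 1 < θ) (hθ2 : θ < 2) (hA : 0 < A)
    (M : ℕ) (hM : 0 < M) (hl : 0 < l) (h : ℝ) (hh : h = l / Real.sqrt M)
    (D : Matrix (Fin M) (Fin M) ℝ)
    (hD : D = Matrix.diagonal fun m : Fin M => 1 - Real.exp (-(((m : ℝ) + 1/2) * h)))
    (b : Fin M → ℝ) (hb : b = fun _ => 1)
    (c : Fin M → ℝ)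
    (hc : c = fun m : Fin M => A⁻¹ * (2 - θ) * h *
      Real.exp (-((2 - θ) * ((m : ℝ) + 1/2) * h)) * (Real.exp (-(((m : ℝ) + 1/2) * h)) - 1))
    (α : ℝ)
    (hα : α = A⁻¹ * (2 - θ) * h *
      ((1 - Real.exp (-((2 - θ) * M * h))) / (1 - Real.exp (-((2 - θ) * h)))) *
      Real.exp (-((2 - θ) * h / 2)))
    (P Q : Polynomial ℝ)
    (hP : P = (Smat D b c α 0).charpoly)
    (hQ : Q = P - (Smat D b c α 1).charpoly)
    (μ : ℂ) (hQμ : Polynomial.aeval μ Q ≠ 0) (hμ0 : μ ≠ 0)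
    (hpoles : ∀ m ∈ Finset.range M,
      μ - 1 + ((Real.exp (-(((m : ℝ) + 1/2) * h)) : ℝ) : ℂ) ≠ 0)
    (hS : (∑ m ∈ Finset.range M,
      ((Real.exp (-((2 - θ) * ((m : ℝ) + 1/2) * h)) : ℝ) : ℂ) /
        (μ - 1 + ((Real.exp (-(((m : ℝ) + 1/2) * h)) : ℝ) : ℂ))) ≠ 0) :
    Polynomial.aeval μ P / Polynomial.aeval μ Q =
      (A : ℂ) * (((θ : ℂ) - 2) * (h : ℂ) * ∑ m ∈ Finset.range M,
        ((Real.exp (-((2 - θ) * ((m : ℝ) + 1/2) * h)) : ℝ) : ℂ) /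
          (μ - 1 + ((Real.exp (-(((m : ℝ) + 1/2) * h)) : ℝ) : ℂ)))⁻¹ * (μ - 1) / μ := by
  -- notation
  set SC : ℂ := ∑ m ∈ Finset.range M,
      ((Real.exp (-((2 - θ) * ((m : ℝ) + 1/2) * h)) : ℝ) : ℂ) /
        (μ - 1 + ((Real.exp (-(((m : ℝ) + 1/2) * h)) : ℝ) : ℂ)) with hSC
  have hh0 : 0 < h := by
    rw [hh]
    exact div_pos hl (Real.sqrt_pos.2 (by exact_mod_cast hM))
  -- key determinant identity
  have hpolesF : ∀ m : Fin M,
      μ - 1 + ((Real.exp (-(((m : ℝ) + 1/2) * h)) : ℝ) : ℂ) ≠ 0 := by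
    intro m
    exact_mod_cast hpoles m.val (Finset.mem_range.2 m.2)
  have key : ∀ lam : ℝ,
      Polynomial.aeval μ (Smat D b c α lam).charpoly
        = (∏ m : Fin M, (μ - 1 + ((Real.exp (-(((m : ℝ) + 1/2) * h)) : ℝ) : ℂ)))
          * ((μ - 1 + (lam : ℂ) * (α : ℂ)) - (lam : ℂ) * ∑ m : Fin M,
              ((c m : ℝ) : ℂ) *
                (μ - 1 + ((Real.exp (-(((m : ℝ) + 1/2) * h)) : ℝ) : ℂ))⁻¹) := by
    intro lam
    have hd : ∀ m : Fin M,
        μ - (1 - ((Real.exp (-(((m : ℝ) + 1/2) * h)) : ℝ) : ℂ)) ≠ 0 := by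
      intro m
      have := hpolesF m
      intro hcon; apply this; linear_combination hcon
    set e : Fin 1 ⊕ Fin M ≃ Fin (M+1) :=
      finSumFinEquiv.trans (finCongr (Nat.add_comm 1 M)) with he
    have he0 : e (Sum.inl 0) = 0 := by
      apply Fin.ext; simp [he, finSumFinEquiv]
    have hes : ∀ i : Fin M, e (Sum.inr i) = i.succ := by
      intro i; apply Fin.ext; simp [he, finSumFinEquiv]
    rw [aeval_charpoly_eq']
    set N : Matrix (Fin (M+1)) (Fin (M+1)) ℂ :=
      Matrix.scalar (Fin (M+1)) μ - (Smat D b c α lam).map (algebraMap ℝ ℂ) with hN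
    have hsub : N.submatrix e e
        = Matrix.fromBlocks (Matrix.of fun _ _ : Fin 1 => μ - 1 + (lam : ℂ) * (α : ℂ))
          (Matrix.of fun (_ : Fin 1) j => -(1 : ℂ))
          (Matrix.of fun i (_ : Fin 1) => -((lam : ℂ) * ((c i : ℝ) : ℂ)))
          (Matrix.diagonal fun m =>
            μ - (1 - ((Real.exp (-(((m : ℝ) + 1/2) * h)) : ℝ) : ℂ))) := by
      ext i j
      rcases i with i | i <;> rcases j with j | j
      · obtain rfl := Fin.fin_one_eq_zero i
        obtain rfl := Fin.fin_one_eq_zero j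
        simp [hN, Smat, he0, Matrix.scalar_apply]
        push_cast; ring
      · obtain rfl := Fin.fin_one_eq_zero i
        simp [hN, Smat, he0, hes, Matrix.scalar_apply, hb,
          Matrix.diagonal_apply_ne _ (Fin.succ_ne_zero j).symm]
      · obtain rfl := Fin.fin_one_eq_zero j
        simp [hN, Smat, he0, hes, Matrix.scalar_apply,
          Matrix.diagonal_apply_ne _ (Fin.succ_ne_zero i)]
      · rcases eq_or_ne i j with rfl | hij
        · simp [hN, Smat, hes, Matrix.scalar_apply, hD]
        · simp [hN, Smat, hes, Matrix.scalar_apply, hD,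
            Matrix.diagonal_apply_ne _ (fun hcon => hij (Fin.succ_injective _ hcon)),
            Matrix.diagonal_apply_ne _ hij]
    rw [← Matrix.det_submatrix_equiv_self e N, hsub, det_border' _ _ _ _ _ hd]
    congr 1
    · exact Finset.prod_congr rfl fun m _ => by ring
    · congr 1
      rw [Finset.mul_sum]
      refine Finset.sum_congr rfl fun m _ => ?_
      rw [show μ - (1 - ((Real.exp (-(((m : ℝ) + 1/2) * h)) : ℝ) : ℂ))
        = μ - 1 + ((Real.exp (-(((m : ℝ) + 1/2) * h)) : ℝ) : ℂ) from by ring]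
      ring
  set Pr : ℂ := ∏ m : Fin M, (μ - 1 + ((Real.exp (-(((m : ℝ) + 1/2) * h)) : ℝ) : ℂ))
    with hPrdef
  have hPval : Polynomial.aeval μ P = Pr * (μ - 1) := by
    rw [hP, key 0]; push_cast; ring
  have hQval : Polynomial.aeval μ Q
      = Pr * ((∑ m : Fin M, ((c m : ℝ) : ℂ) *
          (μ - 1 + ((Real.exp (-(((m : ℝ) + 1/2) * h)) : ℝ) : ℂ))⁻¹) - (α : ℂ)) := by
    rw [hQ, map_sub, hP, key 0, key 1]; push_cast; ring
  -- the sum transformation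
  have hαsum : (α : ℂ) = ((A⁻¹ * (2 - θ) * h : ℝ) : ℂ) *
      ∑ m ∈ Finset.range M,
        ((Real.exp (-((2 - θ) * ((m : ℝ) + 1/2) * h)) : ℝ) : ℂ) := by
    have hr : α = A⁻¹ * (2 - θ) * h *
        ∑ m ∈ Finset.range M, Real.exp (-((2 - θ) * ((m : ℝ) + 1/2) * h)) := by
      rw [hα, geom_exp' θ h hθ2 hh0 M]; ring
    rw [hr]
    push_cast
    ring
  have hT : (∑ m : Fin M, ((c m : ℝ) : ℂ) *
        (μ - 1 + ((Real.exp (-(((m : ℝ) + 1/2) * h)) : ℝ) : ℂ))⁻¹) - (α : ℂ)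
      = -(((A⁻¹ * (2 - θ) * h : ℝ) : ℂ) * μ * SC) := by
    have hsum1 : (∑ m : Fin M, ((c m : ℝ) : ℂ) *
          (μ - 1 + ((Real.exp (-(((m : ℝ) + 1/2) * h)) : ℝ) : ℂ))⁻¹)
        = ∑ m ∈ Finset.range M,
            (((A⁻¹ * (2 - θ) * h : ℝ) : ℂ) *
              ((Real.exp (-((2 - θ) * ((m : ℝ) + 1/2) * h)) : ℝ) : ℂ)
            - ((A⁻¹ * (2 - θ) * h : ℝ) : ℂ) * μ *
              (((Real.exp (-((2 - θ) * ((m : ℝ) + 1/2) * h)) : ℝ) : ℂ) /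
                (μ - 1 + ((Real.exp (-(((m : ℝ) + 1/2) * h)) : ℝ) : ℂ)))) := by
      rw [← Fin.sum_univ_eq_sum_range (fun m : ℕ =>
        (((A⁻¹ * (2 - θ) * h : ℝ) : ℂ) *
              ((Real.exp (-((2 - θ) * ((m : ℝ) + 1/2) * h)) : ℝ) : ℂ)
            - ((A⁻¹ * (2 - θ) * h : ℝ) : ℂ) * μ *
              (((Real.exp (-((2 - θ) * ((m : ℝ) + 1/2) * h)) : ℝ) : ℂ) /
                (μ - 1 + ((Real.exp (-(((m : ℝ) + 1/2) * h)) : ℝ) : ℂ))))) M]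
      refine Finset.sum_congr rfl fun m _ => ?_
      have hne := hpolesF m
      have hcast : ((c m : ℝ) : ℂ) = ((A⁻¹ * (2 - θ) * h : ℝ) : ℂ) *
          ((Real.exp (-((2 - θ) * ((m : ℝ) + 1/2) * h)) : ℝ) : ℂ) *
          (((Real.exp (-(((m : ℝ) + 1/2) * h)) : ℝ) : ℂ) - 1) := by
        rw [hc]; push_cast; ring
      rw [hcast]
      have hgen : ∀ K g e d : ℂ, d = μ - 1 + e → d ≠ 0 →
          K * g * (e - 1) * d⁻¹ = K * g - K * μ * (g / d) := by
        intro K g e d hde hdne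
        subst hde
        field_simp
        ring
      exact hgen _ _ _ _ rfl hne
    rw [hsum1, hαsum, Finset.sum_sub_distrib, ← Finset.mul_sum, ← Finset.mul_sum, hSC]
    ring
  have hPr : Pr ≠ 0 := Finset.prod_ne_zero_iff.2 fun m _ => hpolesF m
  have hTne : (∑ m : Fin M, ((c m : ℝ) : ℂ) *
        (μ - 1 + ((Real.exp (-(((m : ℝ) + 1/2) * h)) : ℝ) : ℂ))⁻¹) - (α : ℂ) ≠ 0 := by
    intro hcon
    apply hQμ
    rw [hQval, hcon, mul_zero]
  rw [hPval, hQval, hT, mul_div_mul_left _ _ hPr]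
  -- final algebra
  have hKc : ((A⁻¹ * (2 - θ) * h : ℝ) : ℂ) = (A : ℂ)⁻¹ * (2 - (θ : ℂ)) * (h : ℂ) := by
    push_cast; ring
  have hAne : (A : ℂ) ≠ 0 := by exact_mod_cast hA.ne'
  have hhne : (h : ℂ) ≠ 0 := by exact_mod_cast hh0.ne'
  have hθne : (θ : ℂ) - 2 ≠ 0 := by
    rw [sub_ne_zero]
    exact_mod_cast hθ2.ne
  have h2θne : 2 - (θ : ℂ) ≠ 0 := by
    rw [sub_ne_zero]
    exact_mod_cast hθ2.ne'
  rw [hKc]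
  field_simp [hS, hμ0, hAne, hhne, hθne, h2θne]
  ring
end

section
/- There exists a constant C > 0 such that |f(e^{is}) − λ| ≥ C·(|s|^θ + λ) for all s ∈ [−π, π] and all λ ∈ [0, λ_max]. -/
open Filter Topology

open Filter Topology Real
set_option maxHeartbeats 1000000

section Aux

lemma keyA {z : ℂ} {γ lam : ℝ} (hγ0 : 0 ≤ γ) (hγ1 : γ < 1) (hlam : 0 ≤ lam)
    (hre : z.re ≤ γ * ‖z‖) :
    Real.sqrt ((1 - γ) / 2) * (‖z‖ + lam) ≤ ‖z - lam‖ := by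
  have ha : (0:ℝ) ≤ ‖z‖ := norm_nonneg z
  have h2 : (‖z - lam‖)^2 = (z.re - lam)^2 + z.im^2 := by
    rw [Complex.sq_norm, Complex.normSq_apply]
    simp [Complex.sub_re, Complex.sub_im]
    ring
  have h3 : (‖z‖)^2 = z.re^2 + z.im^2 := by
    rw [Complex.sq_norm, Complex.normSq_apply]; ring
  have key : ((1 - γ) / 2) * (‖z‖ + lam)^2 ≤ (‖z - lam‖)^2 := by
    rw [h2]
    nlinarith [sq_nonneg (‖z‖ - lam), mul_nonneg hlam (sub_nonneg.2 hre),
      sq_nonneg (‖z‖ + lam)]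
  calc Real.sqrt ((1 - γ) / 2) * (‖z‖ + lam)
      = Real.sqrt (((1 - γ) / 2) * (‖z‖ + lam)^2) := by
        rw [Real.sqrt_mul (by linarith), Real.sqrt_sq (by linarith)]
    _ ≤ Real.sqrt ((‖z - lam‖)^2) := Real.sqrt_le_sqrt key
    _ = ‖z - lam‖ := Real.sqrt_sq (norm_nonneg _)

lemma polarId (s : ℝ) :
    Complex.exp (Complex.I * s) - 1
      = (2 * Real.sin (s/2) : ℝ) * (Complex.cos (s/2 + π/2 : ℝ) + Complex.sin (s/2 + π/2 : ℝ) * Complex.I) := by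
  have hI : Complex.I * s = (s : ℂ) * Complex.I := by ring
  rw [hI, Complex.exp_mul_I]
  have hc : Real.cos s = 1 - 2 * Real.sin (s/2)^2 := by
    have h := Real.cos_two_mul' (s/2)
    have h2 : 2 * (s/2) = s := by ring
    rw [h2] at h
    nlinarith [Real.sin_sq_add_cos_sq (s/2)]
  have hs : Real.sin s = 2 * Real.sin (s/2) * Real.cos (s/2) := by
    have h := Real.sin_two_mul (s/2)
    have h2 : 2 * (s/2) = s := by ring
    rw [h2] at h; linarith
  rw [show Complex.cos s = ((Real.cos s : ℝ) : ℂ) by simp [Complex.ofReal_cos],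
      show Complex.sin s = ((Real.sin s : ℝ) : ℂ) by simp [Complex.ofReal_sin],
      show Complex.cos ((s/2 + π/2 : ℝ) : ℂ) = ((Real.cos (s/2 + π/2) : ℝ) : ℂ) by simp [Complex.ofReal_cos],
      show Complex.sin ((s/2 + π/2 : ℝ) : ℂ) = ((Real.sin (s/2 + π/2) : ℝ) : ℂ) by simp [Complex.ofReal_sin],
      Real.cos_add_pi_div_two, Real.sin_add_pi_div_two, hc, hs]
  push_cast
  ring

lemma polar2 {s : ℝ} (hs : s ∈ Set.Icc (-π) π) (hs0 : s ≠ 0) :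
    ∃ r φ : ℝ, 0 < r ∧ r = 2 * |Real.sin (s/2)| ∧ |φ| = |s|/2 + π/2 ∧
      φ ∈ Set.Ioc (-π) π ∧
      Complex.exp (Complex.I * s) - 1 = (r : ℂ) * (Complex.cos φ + Complex.sin φ * Complex.I) := by
  obtain ⟨hl, hr⟩ := hs
  have hπ := Real.pi_pos
  rcases eq_or_lt_of_le hl with hpi | hl'
  · -- s = -π
    refine ⟨2, π, by norm_num, ?_, ?_, ?_, ?_⟩
    · have hsin : Real.sin (-π/2) = -1 := by
        rw [show (-π/2 : ℝ) = -(π/2) by ring, Real.sin_neg, Real.sin_pi_div_two]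
      rw [← hpi, hsin]; norm_num
    · rw [← hpi]; rw [abs_of_pos hπ, abs_of_neg (by linarith : -π < 0)]; ring
    · exact ⟨by linarith, le_refl _⟩
    · rw [← hpi]
      have h1 : Complex.I * ((-π : ℝ) : ℂ) = ((-π : ℝ) : ℂ) * Complex.I := by ring
      rw [h1, Complex.exp_mul_I]
      rw [show (((-π : ℝ)) : ℂ) = -((π:ℝ) : ℂ) by push_cast; ring]
      rw [Complex.cos_neg, Complex.sin_neg]
      rw [show Complex.cos ((π:ℝ):ℂ) = ((Real.cos π : ℝ) : ℂ) by simp [Complex.ofReal_cos],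
          show Complex.sin ((π:ℝ):ℂ) = ((Real.sin π : ℝ) : ℂ) by simp [Complex.ofReal_sin]]
      rw [Real.cos_pi, Real.sin_pi]
      push_cast; ring
  rcases lt_or_gt_of_ne hs0 with hneg | hpos
  · -- s < 0
    refine ⟨2 * |Real.sin (s/2)|, s/2 - π/2, ?_, rfl, ?_, ?_, ?_⟩
    · have : Real.sin (s/2) < 0 := Real.sin_neg_of_neg_of_neg_pi_lt (by linarith) (by linarith)
      have := abs_pos.2 (ne_of_lt this)
      linarith
    · rw [abs_of_neg hneg, abs_of_neg (by linarith : s/2 - π/2 < 0)]; ring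
    · constructor <;> [linarith; linarith]
    · have hsin : Real.sin (s/2) < 0 := Real.sin_neg_of_neg_of_neg_pi_lt (by linarith) (by linarith)
      rw [polarId s, abs_of_neg hsin]
      have h1 : ((s:ℝ)/2 - π/2) = (s/2 + π/2) - π := by ring
      rw [h1]
      rw [show ((( (s/2 + π/2) - π : ℝ)) : ℂ) = ((s/2 + π/2 : ℝ) : ℂ) - (π : ℝ) by push_cast; ring]
      rw [Complex.cos_sub_pi, Complex.sin_sub_pi]
      push_cast
      ring
  · -- s > 0
    refine ⟨2 * |Real.sin (s/2)|, s/2 + π/2, ?_, rfl, ?_, ?_, ?_⟩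
    · have : 0 < Real.sin (s/2) := Real.sin_pos_of_pos_of_lt_pi (by linarith) (by linarith)
      have := abs_pos.2 (ne_of_gt this)
      linarith
    · rw [abs_of_pos hpos, abs_of_pos (by linarith : (0:ℝ) < s/2 + π/2)]
    · constructor <;> [linarith; linarith]
    · have hsin : 0 < Real.sin (s/2) := Real.sin_pos_of_pos_of_lt_pi (by linarith) (by linarith)
      rw [polarId s, abs_of_pos hsin]

lemma expabs (s : ℝ) : ‖Complex.exp (Complex.I * s)‖ = 1 := by
  rw [Complex.norm_exp]; simp

lemma expne {s : ℝ} (hs : s ∈ Set.Icc (-π) π) (hs0 : s ≠ 0) :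
    Complex.exp (Complex.I * s) ≠ 1 := by
  intro h
  rw [Complex.exp_eq_one_iff] at h
  obtain ⟨n, hn⟩ := h
  have him : s = n * (2 * π) := by
    have := congrArg Complex.im hn
    simpa [Complex.mul_im] using this
  have hπ := Real.pi_pos
  obtain ⟨hl, hr⟩ := hs
  rcases eq_or_ne n 0 with h1 | h1
  · apply hs0
    rw [h1] at him
    simpa using him
  · have h2 : (1:ℝ) ≤ |(n:ℝ)| := by
      have := Int.one_le_abs h1
      calc (1:ℝ) ≤ (|n| : ℤ) := by exact_mod_cast this
        _ = |(n:ℝ)| := by push_cast; simp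
    have h3 : |s| ≤ π := abs_le.2 ⟨hl, hr⟩
    rw [him] at h3
    rw [abs_mul] at h3
    have h4 : |2*π| = 2*π := abs_of_pos (by linarith)
    rw [h4] at h3
    nlinarith [abs_nonneg ((n:ℝ))]

lemma absexpsub (s : ℝ) : ‖Complex.exp (Complex.I * s) - 1‖ = 2 * |Real.sin (s/2)| := by
  rw [polarId s, norm_mul, Complex.norm_cos_add_sin_mul_I, mul_one, Complex.norm_real, Real.norm_eq_abs, abs_mul]
  norm_num

lemma absexpsub_le (s : ℝ) : ‖Complex.exp (Complex.I * s) - 1‖ ≤ |s| := by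
  rw [absexpsub]
  have h := Real.abs_sin_le_abs (x := s/2)
  rw [abs_div] at h
  have : |(2:ℝ)| = 2 := by norm_num
  rw [this] at h
  linarith

lemma cpowPolar {r φ : ℝ} (hr : 0 < r) (hφ : φ ∈ Set.Ioc (-π) π) (θ : ℝ) :
    ((r : ℂ) * (Complex.cos φ + Complex.sin φ * Complex.I)) ^ (θ : ℂ)
      = (r ^ θ : ℝ) * (Complex.cos (θ*φ : ℝ) + Complex.sin (θ*φ : ℝ) * Complex.I) := by
  set w : ℂ := (r : ℂ) * (Complex.cos φ + Complex.sin φ * Complex.I) with hw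
  have habs : ‖w‖ = r := by
    rw [hw, norm_mul, Complex.norm_cos_add_sin_mul_I]
    simp [abs_of_pos hr]
  have hw0 : w ≠ 0 := by
    intro h; rw [h] at habs; simp at habs; linarith
  have harg : Complex.arg w = φ := Complex.arg_mul_cos_add_sin_mul_I hr hφ
  have hlog : Complex.log w = (Real.log r : ℂ) + φ * Complex.I := by
    rw [Complex.log, habs, harg]
  rw [Complex.cpow_def_of_ne_zero hw0, hlog]
  have h1 : ((Real.log r : ℂ) + φ * Complex.I) * θ
      = ((θ * Real.log r : ℝ) : ℂ) + ((θ * φ : ℝ) : ℂ) * Complex.I := by push_cast; ring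
  rw [h1, Complex.exp_add, Complex.exp_mul_I]
  congr 1
  rw [← Complex.ofReal_exp]
  norm_cast
  rw [Real.rpow_def_of_pos hr]
  ring_nf

lemma rePolar (a b : ℝ) :
    ((a : ℂ) * (Complex.cos (b:ℝ) + Complex.sin (b:ℝ) * Complex.I)).re = a * Real.cos b := by
  rw [show Complex.cos ((b:ℝ):ℂ) = ((Real.cos b : ℝ) : ℂ) by simp [Complex.ofReal_cos],
      show Complex.sin ((b:ℝ):ℂ) = ((Real.sin b : ℝ) : ℂ) by simp [Complex.ofReal_sin]]
  simp only [Complex.mul_re, Complex.add_re, Complex.add_im, Complex.mul_im,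
    Complex.ofReal_re, Complex.ofReal_im, Complex.I_re, Complex.I_im]
  ring

lemma absPolar {a : ℝ} (ha : 0 ≤ a) (b : ℝ) :
    ‖(a : ℂ) * (Complex.cos (b:ℝ) + Complex.sin (b:ℝ) * Complex.I)‖ = a := by
  rw [norm_mul, Complex.norm_cos_add_sin_mul_I, mul_one, Complex.norm_real, Real.norm_eq_abs, abs_of_nonneg ha]

lemma zFacts {θ c : ℝ} (hθ0 : 0 ≤ θ) (hθ2 : θ < 2) (hc : 0 < c) {s : ℝ}
    (hs : s ∈ Set.Icc (-π) π) (hs0 : s ≠ 0) (hsmall : θ * |s| ≤ π * (2-θ)/2) :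
    ‖-(c:ℂ) * (Complex.exp (Complex.I*s) - 1) ^ (θ:ℂ)‖
        = c * (2*|Real.sin (s/2)|) ^ θ ∧
      (-(c:ℂ) * (Complex.exp (Complex.I*s) - 1) ^ (θ:ℂ)).re
        ≤ (-Real.cos (π*(θ+2)/4)) * ‖-(c:ℂ) * (Complex.exp (Complex.I*s) - 1) ^ (θ:ℂ)‖ := by
  have hπ := Real.pi_pos
  obtain ⟨r, φ, hr, hreq, hφabs, hφIoc, heq⟩ := polar2 hs hs0
  have hrθ : (0:ℝ) ≤ r ^ θ := Real.rpow_nonneg hr.le θ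
  have habs : ‖-(c:ℂ) * (Complex.exp (Complex.I*s) - 1) ^ (θ:ℂ)‖ = c * r ^ θ := by
    rw [heq, cpowPolar hr hφIoc θ, norm_mul, norm_neg]
    rw [absPolar hrθ (θ*φ)]
    simp [Complex.norm_real, abs_of_pos hc]
  have hre : (-(c:ℂ) * (Complex.exp (Complex.I*s) - 1) ^ (θ:ℂ)).re = -c * (r ^ θ * Real.cos (θ*φ)) := by
    rw [heq, cpowPolar hr hφIoc θ]
    have h1 : -(c:ℂ) * ((r^θ : ℝ) * (Complex.cos (θ*φ : ℝ) + Complex.sin (θ*φ : ℝ) * Complex.I))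
        = ((-(c * r^θ) : ℝ) : ℂ) * (Complex.cos (θ*φ : ℝ) + Complex.sin (θ*φ : ℝ) * Complex.I) := by
      push_cast; ring
    rw [h1, rePolar]
    ring
  refine ⟨by rw [habs, hreq], ?_⟩
  rw [habs, hre]
  have hA : θ * |φ| ≤ π * (θ+2)/4 := by
    rw [hφabs]
    nlinarith
  have hAπ : π * (θ+2)/4 ≤ π := by nlinarith
  have hcos : Real.cos (π*(θ+2)/4) ≤ Real.cos (θ*φ) := by
    rw [show Real.cos (θ*φ) = Real.cos |θ*φ| by rw [Real.cos_abs]]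
    apply Real.cos_le_cos_of_nonneg_of_le_pi (abs_nonneg _) hAπ
    rw [abs_mul, abs_of_nonneg hθ0]
    exact hA
  have hcrθ : (0:ℝ) ≤ c * r ^ θ := mul_nonneg hc.le hrθ
  nlinarith

end Aux

lemma cornerLem (θ c : ℝ) (hθ0 : 0 ≤ θ) (hθ2 : θ < 2) (hc : 0 < c)
    (f : ℂ → ℂ)
    (hcont : ContinuousOn f {μ : ℂ | ‖μ‖ = 1})
    (hcorner : Tendsto (fun μ : ℂ => f μ / (-(c : ℂ) * (μ - 1) ^ (θ : ℂ)))
      (𝓝[{μ : ℂ | ‖μ‖ = 1} \ {1}] 1) (𝓝 1)) :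
    ∃ C a : ℝ, 0 < C ∧ 0 < a ∧ a ≤ π ∧ ∀ s : ℝ, |s| ≤ a → ∀ lam : ℝ, 0 ≤ lam →
      C * (|s|^θ + lam) ≤ ‖f (Complex.exp (Complex.I * s)) - lam‖ := by
  have hπ := Real.pi_pos
  set A := π*(θ+2)/4 with hA
  set γ := -Real.cos A with hγ
  have hA1 : π/2 ≤ A := by rw [hA]; nlinarith
  have hA2 : A < π := by rw [hA]; nlinarith
  have hγ0 : 0 ≤ γ := by
    rw [hγ, neg_nonneg]
    exact Real.cos_nonpos_of_pi_div_two_le_of_le hA1 (by linarith)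
  have hγ1 : γ < 1 := by
    rw [hγ, neg_lt]
    have : Real.cos π < Real.cos A := by
      apply Real.strictAntiOn_cos ⟨by linarith, le_of_lt hA2⟩ ⟨by linarith, le_refl π⟩ hA2
    rw [Real.cos_pi] at this
    linarith
  set δ := Real.sqrt ((1-γ)/2) with hδ
  have hδpos : 0 < δ := Real.sqrt_pos.2 (by linarith)
  -- get ε from hcorner
  rw [Metric.tendsto_nhdsWithin_nhds] at hcorner
  obtain ⟨ε, hεpos, hball⟩ := hcorner (δ/2) (by positivity)
  set a := min (min π (π*(2-θ)/(2*θ+1))) (ε/2) with ha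
  have hapos : 0 < a := by
    have h2θ : (0:ℝ) < 2*θ+1 := by linarith
    have h1 : (0:ℝ) < π*(2-θ)/(2*θ+1) := by
      apply div_pos (by nlinarith) h2θ
    exact lt_min (lt_min hπ h1) (by linarith)
  have haπ : a ≤ π := le_trans (min_le_left _ _) (min_le_left _ _)
  set K := min (c*(2/π)^θ) 1 with hK
  have hKpos : 0 < K := lt_min (by positivity) one_pos
  refine ⟨δ/2 * K, a, mul_pos (by linarith) hKpos, hapos, haπ, ?_⟩
  -- the claim for s ≠ 0
  have main : ∀ s : ℝ, |s| ≤ a → s ≠ 0 → ∀ lam : ℝ, 0 ≤ lam →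
      δ/2 * K * (|s|^θ + lam) ≤ ‖f (Complex.exp (Complex.I * s)) - lam‖ := by
    intro s hsa hs0 lam hlam
    have hsIcc : s ∈ Set.Icc (-π) π := abs_le.1 (hsa.trans haπ)
    set μ := Complex.exp (Complex.I * s) with hμ
    set z := -(c:ℂ) * (μ - 1) ^ (θ:ℂ) with hz
    have hsmall : θ * |s| ≤ π * (2-θ)/2 := by
      have h1 : |s| ≤ π*(2-θ)/(2*θ+1) := hsa.trans (le_trans (min_le_left _ _) (min_le_right _ _))
      have h2 : 0 < 2*θ+1 := by linarith
      have h3 : θ * |s| ≤ θ * (π*(2-θ)/(2*θ+1)) := mul_le_mul_of_nonneg_left h1 hθ0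
      have h4 : θ * (π*(2-θ)/(2*θ+1)) ≤ π * (2-θ)/2 := by
        rw [← mul_div_assoc, div_le_div_iff₀ h2 two_pos]
        nlinarith
      linarith
    obtain ⟨habsz, hrez⟩ := zFacts hθ0 hθ2 hc hsIcc hs0 hsmall
    rw [← hμ, ← hz] at habsz hrez
    have hsin0 : 0 < |Real.sin (s/2)| := by
      rw [abs_pos]
      intro h
      rcases Real.sin_eq_zero_iff.1 h with ⟨n, hn⟩
      -- s/2 = n π with |s| ≤ π, s ≠ 0 ⇒ n = 0 ⇒ s = 0
      obtain ⟨hl, hr⟩ := hsIcc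
      rcases eq_or_ne n 0 with h1 | h1
      · apply hs0; rw [h1] at hn; simp at hn; linarith
      · have h2 : (1:ℝ) ≤ |(n:ℝ)| := by
          have := Int.one_le_abs h1
          calc (1:ℝ) ≤ (|n| : ℤ) := by exact_mod_cast this
            _ = |(n:ℝ)| := by push_cast; simp
        have hs' : |s| ≤ π := abs_le.2 ⟨hl, hr⟩
        have h3 : |s/2| ≤ π/2 := by rw [abs_div, abs_two]; linarith
        rw [← hn, abs_mul, abs_of_pos hπ] at h3
        nlinarith [abs_nonneg ((n:ℝ))]
    have habszpos : 0 < ‖z‖ := by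
      rw [habsz]; positivity
    have hz0 : z ≠ 0 := by
      intro h; rw [h] at habszpos; simp at habszpos
    -- closeness of f μ to z
    have hμS : μ ∈ {μ : ℂ | ‖μ‖ = 1} \ {1} := by
      refine ⟨expabs s, ?_⟩
      simp only [Set.mem_singleton_iff]
      exact expne hsIcc hs0
    have hdist : dist μ 1 < ε := by
      rw [Complex.dist_eq]
      calc ‖μ - 1‖ ≤ |s| := absexpsub_le s
        _ ≤ a := hsa
        _ ≤ ε/2 := min_le_right _ _
        _ < ε := by linarith
    have hclose := hball hμS hdist
    rw [Complex.dist_eq] at hclose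
    have hfz : ‖f μ - z‖ < δ/2 * ‖z‖ := by
      have h1 : f μ - z = (f μ / z - 1) * z := by field_simp
      rw [h1, norm_mul]
      exact mul_lt_mul_of_pos_right hclose habszpos
    -- key geometric estimate
    have hkey : δ * (‖z‖ + lam) ≤ ‖z - lam‖ := keyA hγ0 hγ1 hlam hrez
    have htri : ‖z - lam‖ ≤ ‖f μ - lam‖ + ‖f μ - z‖ := by
      have h1 := norm_sub_le_norm_sub_add_norm_sub z (f μ) (lam : ℂ)
      have h2 : ‖z - f μ‖ = ‖f μ - z‖ := by
        rw [← neg_sub, norm_neg]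
      linarith
    -- lower bound on |z|
    have hsin2 : (2/π) * |s| ≤ 2 * |Real.sin (s/2)| := by
      have habs2 : |s|/2 ≤ π/2 := by
        have : |s| ≤ π := abs_le.2 hsIcc
        linarith
      have h := Real.mul_le_sin (x := |s|/2) (by positivity) habs2
      have h2 : Real.sin (|s|/2) ≤ |Real.sin (s/2)| := by
        rcases le_or_gt 0 s with hcase | hcase
        · rw [abs_of_nonneg hcase]; exact le_abs_self _
        · rw [abs_of_neg hcase, show -s/2 = -(s/2) by ring, Real.sin_neg]
          exact neg_le_abs _
      have h3 : 2/π * (|s|/2) = 2/π * |s| / 2 := by ring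
      rw [h3] at h
      linarith
    have hlowz : c * ((2/π)^θ * |s|^θ) ≤ ‖z‖ := by
      rw [habsz]
      apply mul_le_mul_of_nonneg_left _ hc.le
      rw [← Real.mul_rpow (by positivity) (abs_nonneg s)]
      exact Real.rpow_le_rpow (by positivity) hsin2 hθ0
    have hlower : K * (|s|^θ + lam) ≤ ‖z‖ + lam := by
      have h1 : K ≤ c*(2/π)^θ := min_le_left _ _
      have h2 : K ≤ 1 := min_le_right _ _
      have h3 : (0:ℝ) ≤ |s|^θ := Real.rpow_nonneg (abs_nonneg s) θ
      nlinarith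
    have hmid : δ/2 * (‖z‖ + lam) ≤ ‖f μ - lam‖ := by
      have hδlam : 0 ≤ δ * lam := mul_nonneg hδpos.le hlam
      linarith [hkey, htri, hfz]
    have hfin : δ/2 * (K * (|s|^θ + lam)) ≤ δ/2 * (‖z‖ + lam) :=
      mul_le_mul_of_nonneg_left hlower (by linarith)
    calc δ/2 * K * (|s|^θ + lam) = δ/2 * (K * (|s|^θ + lam)) := by ring
      _ ≤ δ/2 * (‖z‖ + lam) := hfin
      _ ≤ ‖f μ - (lam:ℂ)‖ := hmid
  -- now handle all s including 0
  intro s hsa lam hlam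
  rcases eq_or_ne s 0 with rfl | hs0
  · -- s = 0 by a limit argument
    have hFcont : Continuous (fun t : ℝ => f (Complex.exp (Complex.I * t))) := by
      apply hcont.comp_continuous
      · exact Complex.continuous_exp.comp (continuous_const.mul Complex.continuous_ofReal)
      · exact fun t => expabs t
    have hGc : Continuous (fun t : ℝ => ‖f (Complex.exp (Complex.I * t)) - lam‖) :=
      continuous_norm.comp (hFcont.sub continuous_const)
    have ht1 : Tendsto (fun t : ℝ => ‖f (Complex.exp (Complex.I * t)) - lam‖) (𝓝[>] (0:ℝ))
        (𝓝 (‖f (Complex.exp (Complex.I * (0:ℝ))) - lam‖)) :=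
      (hGc.tendsto 0).mono_left nhdsWithin_le_nhds
    have hca : ContinuousAt (fun t : ℝ => |t| ^ θ) 0 := by
      have h1 : ContinuousAt (fun x : ℝ => x ^ θ) (|(0:ℝ)|) :=
        Real.continuousAt_rpow_const _ θ (Or.inr hθ0)
      exact h1.comp continuous_abs.continuousAt
    have ht2 : Tendsto (fun t : ℝ => δ/2 * K * (|t| ^ θ + lam)) (𝓝[>] (0:ℝ))
        (𝓝 (δ/2 * K * (|(0:ℝ)| ^ θ + lam))) := by
      apply Tendsto.mono_left _ nhdsWithin_le_nhds
      exact ((hca.tendsto.add tendsto_const_nhds).const_mul _)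
    refine le_of_tendsto_of_tendsto ht2 ht1 ?_
    filter_upwards [Ioo_mem_nhdsGT hapos] with t ht
    exact main t (by rw [abs_of_pos ht.1]; exact ht.2.le) (ne_of_gt ht.1) lam hlam
  · exact main s hsa hs0 lam hlam

/-- If `f` is continuous on the unit circle, `f(μ) = −c·(μ−1)^θ·(1+o(1))` as `μ → 1`
along the circle with `θ ∈ [0,2)`, and `f(μ) ∉ [0, λ_max]` for `μ ≠ 1` on the circle,
then there is `C > 0` with `|f(e^{is}) − λ| ≥ C·(|s|^θ + λ)` for all `s ∈ [−π,π]`,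
`λ ∈ [0, λ_max]`. -/
theorem stmt14 (θ c lmax : ℝ) (hθ0 : 0 ≤ θ) (hθ2 : θ < 2) (hc : 0 < c) (hlmax : 0 < lmax)
    (f : ℂ → ℂ)
    (hcont : ContinuousOn f {μ : ℂ | ‖μ‖ = 1})
    (hcorner : Tendsto (fun μ : ℂ => f μ / (-(c : ℂ) * (μ - 1) ^ (θ : ℂ)))
      (𝓝[{μ : ℂ | ‖μ‖ = 1} \ {1}] 1) (𝓝 1))
    (havoid : ∀ μ : ℂ, ‖μ‖ = 1 → μ ≠ 1 →
      ∀ x : ℝ, 0 ≤ x → x ≤ lmax → f μ ≠ (x : ℂ)) :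
    ∃ C : ℝ, 0 < C ∧ ∀ s ∈ Set.Icc (-Real.pi) Real.pi, ∀ lam ∈ Set.Icc (0 : ℝ) lmax,
      C * (|s| ^ θ + lam) ≤ ‖f (Complex.exp (Complex.I * s)) - (lam : ℂ)‖ := by
  have hπ := Real.pi_pos
  obtain ⟨C1, a, hC1, hapos, haπ, hcornerBd⟩ := cornerLem θ c hθ0 hθ2 hc f hcont hcorner
  have hFcont : Continuous (fun t : ℝ => f (Complex.exp (Complex.I * t))) := by
    apply hcont.comp_continuous
    · exact Complex.continuous_exp.comp (continuous_const.mul Complex.continuous_ofReal)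
    · exact fun t => expabs t
  set g : ℝ × ℝ → ℝ := fun p => ‖f (Complex.exp (Complex.I * p.1)) - (p.2 : ℂ)‖
    with hg
  have hgc : Continuous g := by
    apply continuous_norm.comp
    exact (hFcont.comp continuous_fst).sub (Complex.continuous_ofReal.comp continuous_snd)
  set T : Set (ℝ × ℝ) := (Set.Icc (-π) π ∩ {t : ℝ | a ≤ |t|}) ×ˢ Set.Icc (0:ℝ) lmax with hT
  have hTc : IsCompact T :=
    (isCompact_Icc.inter_right (isClosed_le continuous_const continuous_abs)).prod isCompact_Icc
  have hTne : T.Nonempty := by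
    refine ⟨(π, 0), ⟨⟨⟨by linarith, le_refl π⟩, ?_⟩, ⟨le_refl 0, hlmax.le⟩⟩⟩
    show a ≤ |π|
    rw [abs_of_pos hπ]; exact haπ
  obtain ⟨p0, hp0T, hmin⟩ := hTc.exists_isMinOn hTne hgc.continuousOn
  obtain ⟨⟨hp1Icc, hp1abs⟩, hp2⟩ := hp0T
  have hp1ne : p0.1 ≠ 0 := by
    intro h
    have : a ≤ |p0.1| := hp1abs
    rw [h] at this; simp at this; linarith
  have hm : 0 < g p0 := by
    rw [hg]
    rw [norm_pos_iff]
    rw [sub_ne_zero]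
    exact havoid _ (expabs p0.1) (expne hp1Icc hp1ne) p0.2 hp2.1 hp2.2
  set C2 : ℝ := g p0 / (π^θ + lmax) with hC2
  have hπθ : (0:ℝ) < π^θ := Real.rpow_pos_of_pos hπ θ
  have hC2pos : 0 < C2 := div_pos hm (by linarith)
  refine ⟨min C1 C2, lt_min hC1 hC2pos, ?_⟩
  intro s hs lam hlam
  have hnn : (0:ℝ) ≤ |s|^θ + lam := add_nonneg (Real.rpow_nonneg (abs_nonneg s) θ) hlam.1
  rcases le_or_gt |s| a with hcase | hcase
  · calc min C1 C2 * (|s|^θ + lam) ≤ C1 * (|s|^θ + lam) :=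
        mul_le_mul_of_nonneg_right (min_le_left _ _) hnn
      _ ≤ _ := hcornerBd s hcase lam hlam.1
  · have hmem : (s, lam) ∈ T := ⟨⟨abs_le.1 (abs_le.2 hs), hcase.le⟩, hlam⟩
    have h1 : g p0 ≤ g (s, lam) := hmin hmem
    have h2 : |s|^θ ≤ π^θ := Real.rpow_le_rpow (abs_nonneg s) (abs_le.2 hs) hθ0
    have h3 : min C1 C2 * (|s|^θ + lam) ≤ C2 * (π^θ + lmax) := by
      apply mul_le_mul (min_le_right _ _) (by linarith [hlam.2]) hnn hC2pos.le
    have h4 : C2 * (π^θ + lmax) = g p0 := div_mul_cancel₀ _ (ne_of_gt (by linarith))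
    have h5 : g (s, lam) = ‖f (Complex.exp (Complex.I * s)) - (lam : ℂ)‖ := rfl
    linarith [h1, h3, h4.le, h5.le]
end

section
/- Ψ is injective on the set {μ ∈ ℂ : |μ| > 1} ∪ {∞} if and only if −1 < q_0/q_1 ≤ (1−β)/(3+β). -/
set_option maxHeartbeats 1000000


open Filter Topology OnePoint

/-- The rational map `Ψ(μ) = (μ−1)(μ−β)/(q₀+q₁μ)` regarded as a self-map of the
Riemann sphere `ℂ ∪ {∞}`: the pole `μ = −q₀/q₁` is sent to `∞`, and `Ψ(∞) = ∞`
(the numerator has degree 2 and the denominator degree 1). -/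
noncomputable def psiSphere (β q0 q1 : ℝ) : OnePoint ℂ → OnePoint ℂ :=
  fun x => Option.elim x ∞ fun μ =>
    if (q0 : ℂ) + q1 * μ = 0 then ∞
    else (((μ - 1) * (μ - β) / ((q0 : ℂ) + q1 * μ) : ℂ) : OnePoint ℂ)

lemma key_ineq (β t x y : ℝ) (hβ1 : -1 < β) (hβ2 : β < 1) (ht1 : -1 < t)
    (ht2 : (3+β)*t ≤ 1-β) (hC : 1 < (x-t)^2 + y^2) :
    ((1+t)*(t+β) - t*x)^2 + t^2*y^2 < x^2 + y^2 := by
  have ht3 : t < 1 := by nlinarith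
  have h1t : (0:ℝ) < 1 + t := by linarith
  have h1b : (0:ℝ) < 1 + β := by linarith
  rcases lt_trichotomy x (t-1) with hx | hx | hx
  · -- x < t-1 : both factors strictly negative
    have hf1 : (0:ℝ) < (1+t)*(t+β) - (1+t)*x := by nlinarith
    have hf2 : (0:ℝ) < -((1-t)*x + (1+t)*(t+β)) := by nlinarith
    nlinarith [mul_pos hf1 hf2, mul_nonneg (by nlinarith : (0:ℝ) ≤ 1 - t^2) (sq_nonneg y)]
  · -- x = t-1 : product nonneg, and y^2 > 0
    subst hx
    have hy : 0 < y^2 := by nlinarith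
    have hf1 : (0:ℝ) ≤ (1+t)*(t+β) - (1+t)*(t-1) := by nlinarith
    have hf2 : (0:ℝ) ≤ -((1-t)*(t-1) + (1+t)*(t+β)) := by nlinarith
    nlinarith [mul_nonneg hf1 hf2, mul_pos (by nlinarith : (0:ℝ) < 1 - t^2) hy]
  rcases le_or_gt (t+1) x with hx2 | hx2
  · -- x ≥ t+1 : both factors positive
    have hf1 : (0:ℝ) < (1+t)*x - (1+t)*(t+β) := by nlinarith
    have hf2 : (0:ℝ) < (1-t)*x + (1+t)*(t+β) := by nlinarith
    nlinarith [mul_pos hf1 hf2, mul_nonneg (by nlinarith : (0:ℝ) ≤ 1 - t^2) (sq_nonneg y)]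
  · -- t-1 < x < t+1
    have P1 : (0:ℝ) < (1 - t^2) * ((x-t)^2 + y^2 - 1) := by
      apply mul_pos (by nlinarith) (by linarith)
    rcases le_or_gt 0 t with ht0 | ht0
    · have P2 : (0:ℝ) ≤ ((1+t)*(1+β)) * ((1-β) - (3+β)*t) :=
        mul_nonneg (mul_nonneg h1t.le h1b.le) (by linarith)
      have P3 : (0:ℝ) ≤ ((1+t)*(1+β)*t) * (x - (t-1)) :=
        mul_nonneg (mul_nonneg (mul_nonneg h1t.le h1b.le) ht0) (by linarith)
      nlinarith [P1, P2, P3]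
    · have P2 : (0:ℝ) ≤ ((1+t)*(1+β)) * ((1+t)*(1-β)) :=
        mul_nonneg (mul_nonneg h1t.le h1b.le) (mul_nonneg h1t.le (by linarith))
      have P3 : (0:ℝ) ≤ ((1+t)*(1+β)*(-t)) * ((t+1) - x) :=
        mul_nonneg (mul_nonneg (mul_nonneg h1t.le h1b.le) (by linarith)) (by linarith)
      nlinarith [P1, P2, P3]

lemma key_complex (β t : ℝ) (hβ1 : -1 < β) (hβ2 : β < 1) (ht1 : -1 < t)
    (ht2 : (3+β)*t ≤ 1-β) (μ ν : ℂ) (hμ : 1 < ‖μ‖)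
    (h : (μ + (t:ℂ)) * (ν + (t:ℂ)) = (((1+t)*(t+β) : ℝ) : ℂ)) :
    ‖ν‖ < 1 := by
  have ht3 : t < 1 := by nlinarith
  have htabs : ‖((t:ℂ))‖ < 1 := by
    rw [Complex.norm_real, Real.norm_eq_abs]; rw [abs_lt]; constructor <;> linarith
  set w : ℂ := μ + t with hwdef
  have hw : w ≠ 0 := by
    intro h0
    have : μ = -(t:ℂ) := by rw [← sub_eq_zero]; rw [hwdef] at h0; linear_combination h0
    rw [this, norm_neg] at hμ
    exact absurd hμ (not_lt.mpr htabs.le)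
  have h' : w * (ν + (t:ℂ)) = (1+(t:ℂ))*((t:ℂ)+(β:ℂ)) := by push_cast at h ⊢; linear_combination h
  have hν : ν = ((((1+t)*(t+β) : ℝ) : ℂ) - (t:ℂ)*w) / w := by
    field_simp
    push_cast
    linear_combination h'
  have hC : 1 < (w.re - t)^2 + w.im^2 := by
    have h1 : Complex.normSq μ = (w.re - t)^2 + w.im^2 := by
      have : μ = w - t := by rw [hwdef]; ring
      rw [this, Complex.normSq_apply]
      simp [Complex.sub_re, Complex.sub_im]
      ring
    have h2 : 1 < Complex.normSq μ := by
      rw [← Complex.sq_norm]; nlinarith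
    linarith [h1 ▸ h2]
  have key := key_ineq β t w.re w.im hβ1 hβ2 ht1 ht2 hC
  have hnum : Complex.normSq ((((1+t)*(t+β) : ℝ) : ℂ) - (t:ℂ)*w)
      = ((1+t)*(t+β) - t*w.re)^2 + t^2*w.im^2 := by
    rw [Complex.normSq_apply]
    simp [Complex.sub_re, Complex.sub_im, Complex.mul_re, Complex.mul_im]
    ring
  have hden : Complex.normSq w = w.re^2 + w.im^2 := by
    rw [Complex.normSq_apply]; ring
  have habs : ‖((((1+t)*(t+β) : ℝ) : ℂ) - (t:ℂ)*w)‖ < ‖w‖ := by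
    have h1 : ‖((((1+t)*(t+β) : ℝ) : ℂ) - (t:ℂ)*w)‖ ^ 2
        < ‖w‖ ^ 2 := by
      rw [Complex.sq_norm, Complex.sq_norm, hnum, hden]; linarith
    nlinarith [norm_nonneg ((((1+t)*(t+β) : ℝ) : ℂ) - (t:ℂ)*w),
      norm_nonneg w]
  rw [hν, norm_div]
  rw [div_lt_one (norm_pos_iff.mpr hw)]
  exact habs

lemma psi_coe (β q0 q1 : ℝ) (ν : ℂ) (h : (q0 : ℂ) + q1 * ν ≠ 0) :
    psiSphere β q0 q1 (ν : OnePoint ℂ)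
      = (((ν - 1) * (ν - β) / ((q0 : ℂ) + q1 * ν) : ℂ) : OnePoint ℂ) := by
  show (if (q0 : ℂ) + q1 * ν = 0 then ∞ else _) = _
  rw [if_neg h]

lemma psi_pole (β q0 q1 : ℝ) (ν : ℂ) (h : (q0 : ℂ) + q1 * ν = 0) :
    psiSphere β q0 q1 (ν : OnePoint ℂ) = ∞ := by
  show (if (q0 : ℂ) + q1 * ν = 0 then ∞ else _) = _
  rw [if_pos h]

/-- For `β ∈ (−1,1)`, `q₁ ≠ 0`, `q₀ ≠ −q₁`, the map `Ψ` is injective on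
`{μ : |μ| > 1} ∪ {∞}` iff `−1 < q₀/q₁ ≤ (1−β)/(3+β)`. -/
theorem stmt19 (β q0 q1 : ℝ) (hβ1 : -1 < β) (hβ2 : β < 1) (hq1 : q1 ≠ 0)
    (hq0 : q0 ≠ -q1) :
    Set.InjOn (psiSphere β q0 q1)
        ({(∞ : OnePoint ℂ)} ∪ ((fun μ : ℂ => (μ : OnePoint ℂ)) ''
          {μ : ℂ | 1 < ‖μ‖})) ↔
      (-1 < q0 / q1 ∧ q0 / q1 ≤ (1 - β) / (3 + β)) := by
  set t := q0 / q1 with htdef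
  have hT1 : (0:ℝ) < 3 + β := by linarith
  have hq1c : (q1:ℂ) ≠ 0 := Complex.ofReal_ne_zero.mpr hq1
  have hq0c : (q0:ℂ) = q1 * (t:ℂ) := by
    rw [htdef]; push_cast; field_simp
  have htne : t ≠ -1 := by
    intro h
    apply hq0
    have := (div_eq_iff hq1).mp h
    linarith
  have hmemi : (∞ : OnePoint ℂ) ∈ ({(∞ : OnePoint ℂ)} ∪ ((fun μ : ℂ => (μ : OnePoint ℂ)) ''
          {μ : ℂ | 1 < ‖μ‖})) := Or.inl rfl
  have hmemc : ∀ ν : ℂ, 1 < ‖ν‖ → (ν : OnePoint ℂ) ∈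
      ({(∞ : OnePoint ℂ)} ∪ ((fun μ : ℂ => (μ : OnePoint ℂ)) ''
          {μ : ℂ | 1 < ‖μ‖})) := fun ν hν => Or.inr ⟨ν, hν, rfl⟩
  constructor
  · -- injective → condition; contrapositive
    intro hinj
    by_contra hcon
    -- pole collision machinery
    have poleCase : 1 < |t| → False := by
      intro habs
      have hb : 1 < ‖(-(t:ℂ))‖ := by
        rw [norm_neg, Complex.norm_real, Real.norm_eq_abs]; exact habs
      have hΨb : psiSphere β q0 q1 ((-(t:ℂ) : ℂ) : OnePoint ℂ) = ∞ := by
        apply psi_pole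
        rw [hq0c]; ring
      have := hinj hmemi (hmemc _ hb) (by rw [hΨb]; rfl)
      exact (OnePoint.infty_ne_coe _) this
    rcases lt_trichotomy t (-1) with ht | ht | ht
    · exact poleCase (by rw [abs_of_neg (by linarith : t < 0)]; linarith)
    · exact htne ht
    · -- t > -1, so the failing condition is t > T
      have hT : (1 - β) / (3 + β) < t := by
        rcases not_and_or.mp hcon with h | h
        · exact absurd ht (by simpa using h)
        · exact lt_of_not_ge h
      have hTt : 1 - β < (3+β)*t := by
        rw [div_lt_iff₀ hT1] at hT; linarith
      rcases le_or_gt t 1 with ht1 | ht1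
      · -- T < t ≤ 1 : construct a genuine collision
        set A : ℝ := (1+β)*(t+1)*((3+β)*t - (1-β)) with hAdef
        have hA : 0 < A := by
          apply mul_pos (mul_pos (by linarith) (by linarith)) (by linarith)
        have hden : 0 < 2 - t^2 + A := by nlinarith
        set y : ℝ := Real.sqrt (A / (2 - t^2 + A)) with hydef
        have hy2 : y^2 = A / (2 - t^2 + A) := Real.sq_sqrt (le_of_lt (div_pos hA hden))
        have hy0 : 0 < y := Real.sqrt_pos.mpr (div_pos hA hden)
        have hyA : (1 - t^2) * y^2 < A := by
          rw [hy2, mul_div_assoc', div_lt_iff₀ hden]; nlinarith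
        set μ : ℂ := ⟨t - 1, y⟩ - (t:ℂ) with hμdef
        -- so μ + t = ⟨t-1, y⟩
        have hw : μ + (t:ℂ) = ⟨t - 1, y⟩ := by rw [hμdef]; ring
        have hwne : μ + (t:ℂ) ≠ 0 := by
          rw [hw]
          intro h0
          have := congrArg Complex.im h0
          simp at this
          linarith
        set c : ℝ := (1+t)*(t+β) with hcdef
        have hcpos : (t-1)^2 < c := by rw [hcdef]; nlinarith
        set ν : ℂ := ((c:ℝ) : ℂ) / (μ + (t:ℂ)) - (t:ℂ) with hνdef
        have hprod : (μ + (t:ℂ)) * (ν + (t:ℂ)) = ((c:ℝ) : ℂ) := by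
          rw [hνdef]; field_simp; ring
        have habsμ : 1 < ‖μ‖ := by
          have h1 : Complex.normSq μ = 1 + y^2 := by
            rw [hμdef, Complex.normSq_apply]
            simp [Complex.sub_re, Complex.sub_im]
            ring
          have : 1 < ‖μ‖ ^ 2 := by rw [Complex.sq_norm, h1]; nlinarith
          nlinarith [norm_nonneg μ]
        have habsν : 1 < ‖ν‖ := by
          have hν2 : ν = (((c:ℝ):ℂ) - (t:ℂ)*(μ + (t:ℂ))) / (μ + (t:ℂ)) := by
            rw [hνdef]; field_simp
          have hnum : Complex.normSq (((c:ℝ):ℂ) - (t:ℂ)*(μ + (t:ℂ)))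
              = (c - t*(t-1))^2 + t^2*y^2 := by
            rw [hw, Complex.normSq_apply]
            simp [Complex.sub_re, Complex.sub_im, Complex.mul_re, Complex.mul_im]
            ring
          have hden2 : Complex.normSq (μ + (t:ℂ)) = (t-1)^2 + y^2 := by
            rw [hw, Complex.normSq_apply]
            simp only []
            ring
          have hlt : Complex.normSq (μ + (t:ℂ))
              < Complex.normSq (((c:ℝ):ℂ) - (t:ℂ)*(μ + (t:ℂ))) := by
            rw [hnum, hden2]
            have hAeq : (c - t*(t-1))^2 - (t-1)^2 = A := by rw [hcdef, hAdef]; ring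
            nlinarith [hyA]
          rw [hν2, norm_div, lt_div_iff₀ (norm_pos_iff.mpr hwne)]
          have := Complex.sq_norm (μ + (t:ℂ))
          have := Complex.sq_norm (((c:ℝ):ℂ) - (t:ℂ)*(μ + (t:ℂ)))
          nlinarith [norm_nonneg (μ + (t:ℂ)),
            norm_nonneg (((c:ℝ):ℂ) - (t:ℂ)*(μ + (t:ℂ)))]
        have hνne : ν + (t:ℂ) ≠ 0 := by
          intro h0
          rw [h0, mul_zero] at hprod
          have : c = 0 := by exact_mod_cast hprod.symm
          nlinarith [sq_nonneg (t-1)]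
        have hμν : μ ≠ ν := by
          intro h0
          rw [← h0] at hprod
          have hre := congrArg Complex.re hprod
          have : ((μ + (t:ℂ)) * (μ + (t:ℂ))).re = (t-1)^2 - y^2 := by
            rw [hw, Complex.mul_re]
            simp
            ring
          rw [this] at hre
          simp at hre
          nlinarith [hy0]
        -- the two points have equal psiSphere values
        have hdμ : (q0:ℂ) + q1 * μ ≠ 0 := by
          rw [hq0c]
          intro h0
          apply hwne
          have : (q1:ℂ) * (μ + t) = 0 := by linear_combination h0
          exact (mul_eq_zero.mp this).resolve_left hq1c
        have hdν : (q0:ℂ) + q1 * ν ≠ 0 := by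
          rw [hq0c]
          intro h0
          apply hνne
          have : (q1:ℂ) * (ν + t) = 0 := by linear_combination h0
          exact (mul_eq_zero.mp this).resolve_left hq1c
        have hvals : psiSphere β q0 q1 (μ : OnePoint ℂ) = psiSphere β q0 q1 (ν : OnePoint ℂ) := by
          rw [psi_coe β q0 q1 μ hdμ, psi_coe β q0 q1 ν hdν]
          congr 1
          rw [div_eq_div_iff hdμ hdν, hq0c]
          have hc' : (μ + (t:ℂ)) * (ν + (t:ℂ)) = (1+(t:ℂ))*((t:ℂ)+(β:ℂ)) := by
            rw [hprod, hcdef]; push_cast; ring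
          linear_combination (q1:ℂ) * (μ - ν) * hc'
        exact hμν (OnePoint.coe_injective (hinj (hmemc μ habsμ) (hmemc ν habsν) hvals))
      · exact poleCase (by rw [abs_of_pos (by linarith)]; exact ht1)
  · rintro ⟨h1, h2⟩
    have h2' : (3+β)*t ≤ 1-β := by
      rw [le_div_iff₀ hT1] at h2
      linarith
    have ht3 : t < 1 := by nlinarith
    have htabs : ∀ ν : ℂ, 1 < ‖ν‖ → (q0:ℂ) + q1 * ν ≠ 0 := by
      intro ν hν h0
      have hν0 : ν = -(t:ℂ) := by
        rw [hq0c] at h0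
        have : (q1:ℂ) * (ν + t) = 0 := by linear_combination h0
        have := (mul_eq_zero.mp this).resolve_left hq1c
        linear_combination this
      rw [hν0, norm_neg, Complex.norm_real, Real.norm_eq_abs] at hν
      rcases lt_abs.mp hν with h | h <;> linarith
    intro a ha b hb hab
    rcases ha with ha | ⟨μ, hμ, rfl⟩
    · rcases hb with hb | ⟨ν, hν, rfl⟩
      · rw [Set.mem_singleton_iff.mp ha, Set.mem_singleton_iff.mp hb]
      · exfalso
        rw [Set.mem_singleton_iff.mp ha] at hab
        rw [psi_coe β q0 q1 ν (htabs ν hν)] at hab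
        exact (OnePoint.infty_ne_coe _) hab
    · rcases hb with hb | ⟨ν, hν, rfl⟩
      · exfalso
        rw [Set.mem_singleton_iff.mp hb] at hab
        rw [psi_coe β q0 q1 μ (htabs μ hμ)] at hab
        exact (OnePoint.coe_ne_infty _) hab
      · simp only [Set.mem_setOf_eq] at hμ hν
        rw [psi_coe β q0 q1 μ (htabs μ hμ), psi_coe β q0 q1 ν (htabs ν hν)] at hab
        have hEq := OnePoint.coe_injective hab
        rw [div_eq_div_iff (htabs μ hμ) (htabs ν hν), hq0c] at hEq
        have hfact : (μ - ν) * ((μ + (t:ℂ))*(ν + (t:ℂ)) - (((1+t)*(t+β) : ℝ) : ℂ)) = 0 := by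
          have h3 : (q1:ℂ) * ((μ - ν) * ((μ + (t:ℂ))*(ν + (t:ℂ)) - (((1+t)*(t+β) : ℝ) : ℂ))) = 0 := by
            push_cast
            linear_combination hEq
          exact (mul_eq_zero.mp h3).resolve_left hq1c
        rcases mul_eq_zero.mp hfact with h3 | h3
        · congr 1
          exact sub_eq_zero.mp h3
        · exfalso
          have := key_complex β t hβ1 hβ2 h1 h2' μ ν hμ (by linear_combination h3)
          exact absurd hν (not_lt.mpr this.le)
end
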